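/- arXiv:2208.07782 — 5 statements merged into one kernel-verified Lean document; each statement's English description precedes it below -/
import Mathlib

section
/- Let P be a finite p-group with Φ(P) = P' = Z(P) and |P : P'| = p². Then P possesses an abelian maximal subgroup A, and |A| = |P'|². -/
open Subgroup
open scoped commutatorElement

private lemma exists_two_gen_aux {p : ℕ} (hp : p.Prime) {Q : Type*} [Group Q] [Finite Q]
    (hQ : Nat.card Q = p ^ 2) : ∃ u v : Q, Subgroup.closure {u, v} = ⊤ := by
  have hnt : Nontrivial Q := by
    rw [← Finite.one_lt_card_iff_nontrivial, hQ]
    exact Nat.one_lt_pow two_ne_zero hp.one_lt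
  obtain ⟨u, hu⟩ := exists_ne (1 : Q)
  by_cases h : Subgroup.closure ({u} : Set Q) = ⊤
  · exact ⟨u, u, by simpa using h⟩
  · have : ∃ v : Q, v ∉ Subgroup.closure ({u} : Set Q) := by
      by_contra hc
      push_neg at hc
      exact h ((Subgroup.eq_top_iff' _).mpr hc)
    obtain ⟨v, hv⟩ := this
    refine ⟨u, v, ?_⟩
    set T := Subgroup.closure ({u, v} : Set Q) with hT
    have hUT : Subgroup.closure ({u} : Set Q) ≤ T :=
      Subgroup.closure_mono (by simp)
    have hvT : v ∈ T := Subgroup.subset_closure (by simp)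
    have hcardU : p ∣ Nat.card (Subgroup.closure ({u} : Set Q)) := by
      have hdvd : Nat.card (Subgroup.closure ({u} : Set Q)) ∣ p ^ 2 :=
        hQ ▸ Subgroup.card_subgroup_dvd_card _
      obtain ⟨i, hi, hcard⟩ := (Nat.dvd_prime_pow hp).mp hdvd
      rcases Nat.eq_zero_or_pos i with rfl | hipos
      · exfalso
        simp only [pow_zero] at hcard
        have : Subgroup.closure ({u} : Set Q) = ⊥ := Subgroup.eq_bot_of_card_eq _ hcard
        exact hu (by simpa [this] using
          Subgroup.subset_closure (Set.mem_singleton u : u ∈ ({u} : Set Q)))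
      · exact hcard ▸ dvd_pow_self p hipos.ne'
    have hne : Subgroup.closure ({u} : Set Q) ≠ T := fun he => hv (he ▸ hvT)
    have hdvdT : Nat.card T ∣ p ^ 2 := hQ ▸ Subgroup.card_subgroup_dvd_card _
    obtain ⟨j, hj, hcardT⟩ := (Nat.dvd_prime_pow hp).mp hdvdT
    have hdvd2 : Nat.card (Subgroup.closure ({u} : Set Q)) ∣ Nat.card T :=
      Subgroup.card_dvd_of_le hUT
    have hlt : Nat.card (Subgroup.closure ({u} : Set Q)) < Nat.card T := by
      rcases lt_or_eq_of_le (Nat.le_of_dvd Nat.card_pos hdvd2) with h' | h'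
      · exact h'
      · exact absurd (Subgroup.eq_of_le_of_card_ge hUT h'.ge) hne
    have : j = 2 := by
      by_contra hj2
      have hjle : j ≤ 1 := by omega
      have hTle : Nat.card T ≤ p :=
        hcardT ▸ (pow_le_pow_right₀ hp.one_lt.le hjle).trans (by simp)
      have hple : p ≤ Nat.card (Subgroup.closure ({u} : Set Q)) :=
        Nat.le_of_dvd Nat.card_pos hcardU
      omega
    exact Subgroup.eq_top_of_card_eq _ (by rw [hcardT, this, hQ])

private lemma commutator_pow_aux {G : Type*} [Group G]
    (hc : ∀ g h : G, ⁅g, h⁆ ∈ Subgroup.center G)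
    (x y : G) (n : ℕ) : ⁅x, y⁆ ^ n = ⁅x, y ^ n⁆ := by
  induction n with
  | zero => simp
  | succ n ih =>
    have key : ⁅x, y ^ (n + 1)⁆ = ⁅x, y⁆ * (y * ⁅x, y ^ n⁆ * y⁻¹) := by
      rw [pow_succ']
      simp only [commutatorElement_def]
      group
    have hcent : y * ⁅x, y ^ n⁆ * y⁻¹ = ⁅x, y ^ n⁆ := by
      have := (Subgroup.mem_center_iff.mp (hc x (y ^ n)) y)
      rw [this, mul_assoc, mul_inv_cancel, mul_one]
    rw [key, hcent, ← ih, pow_succ']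

/-- Let `P` be a finite `p`-group with `Φ(P) = P' = Z(P)` and `|P : P'| = p²`.  Then `P`
possesses an abelian maximal subgroup `A` (necessarily of index `p`), and `|A| = |P'|²`. -/
theorem exists_abelian_maximal_subgroup
    {p : ℕ} (hp : p.Prime) {P : Type*} [Group P] [Finite P] (hP : IsPGroup p P)
    (h1 : frattini P = commutator P) (h2 : commutator P = Subgroup.center P)
    (h3 : (commutator P).index = p ^ 2) :
    ∃ A : Subgroup P, A.index = p ∧ IsMulCommutative A ∧
      Nat.card A = (Nat.card (commutator P)) ^ 2 := by
  haveI : Fact p.Prime := ⟨hp⟩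
  set Z := Subgroup.center P with hZ
  have hZind : Z.index = p ^ 2 := h2 ▸ h3
  -- all commutators are central
  have hcc : ∀ g h : P, ⁅g, h⁆ ∈ Z :=
    fun g h => h2 ▸ Subgroup.commutator_mem_commutator (mem_top g) (mem_top h)
  have hQcard : Nat.card (P ⧸ Z) = p ^ 2 := hZind
  -- the commutator subgroup is nontrivial
  have hnontriv : commutator P ≠ ⊥ := by
    intro hbot
    have hcab : ∀ g h : P, g * h = h * g := by
      intro g h
      have : ⁅g, h⁆ ∈ (⊥ : Subgroup P) :=
        hbot ▸ Subgroup.commutator_mem_commutator (mem_top g) (mem_top h)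
      rw [Subgroup.mem_bot] at this
      exact commutatorElement_eq_one_iff_mul_comm.mp this
    have hZtop : Z = ⊤ :=
      (Subgroup.eq_top_iff' Z).mpr fun x => Subgroup.mem_center_iff.mpr fun g => hcab g x
    rw [hZtop, Subgroup.index_top] at hZind
    exact absurd hZind (Nat.one_lt_pow two_ne_zero hp.one_lt).ne
  -- the quotient by the center is not cyclic
  have hnotcyc : ¬ IsCyclic (P ⧸ Z) := by
    intro hcyc
    have hcab : ∀ g h : P, g * h = h * g :=
      commutative_of_cyclic_center_quotient (QuotientGroup.mk' Z)
        (by rw [QuotientGroup.ker_mk'])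
    apply hnontriv
    rw [eq_bot_iff, _root_.commutator_def, Subgroup.commutator_le]
    intro g _ h _
    rw [Subgroup.mem_bot]
    exact commutatorElement_eq_one_iff_mul_comm.mpr (hcab g h)
  -- every element of the quotient has order dividing p
  have hexp : ∀ q : P ⧸ Z, q ^ p = 1 := by
    intro q
    have hdvd : orderOf q ∣ p ^ 2 := hQcard ▸ orderOf_dvd_natCard q
    obtain ⟨i, hi, hq⟩ := (Nat.dvd_prime_pow hp).mp hdvd
    rcases Nat.lt_or_ge i 2 with hilt | hige
    · have : orderOf q ∣ p := by
        rw [hq]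
        exact (pow_dvd_pow p (by omega : i ≤ 1)).trans (by simp)
      exact orderOf_dvd_iff_pow_eq_one.mp this
    · exfalso
      have : orderOf q = Nat.card (P ⧸ Z) := by
        rw [hQcard, hq]
        congr 1
        omega
      exact hnotcyc (isCyclic_of_orderOf_eq_card q this)
  -- choose two generators of the quotient, and lift them
  obtain ⟨u, v, huv⟩ := exists_two_gen_aux hp hQcard
  obtain ⟨x, rfl⟩ := QuotientGroup.mk'_surjective Z u
  obtain ⟨y, rfl⟩ := QuotientGroup.mk'_surjective Z v
  set c := ⁅x, y⁆ with hc
  set H := Subgroup.zpowers c with hH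
  have hHZ : H ≤ Z := by
    rw [hH, Subgroup.zpowers_le]
    exact hcc x y
  haveI hHnormal : H.Normal := by
    constructor
    intro h hh g
    rw [Subgroup.mem_center_iff.mp (hHZ hh) g, mul_assoc, mul_inv_cancel, mul_one]
    exact hh
  -- {x, y} together with the center generate P
  have hgenP : Subgroup.closure ({x, y} : Set P) ⊔ Z = ⊤ := by
    set K := Subgroup.closure ({x, y} : Set P) ⊔ Z with hK
    have hker : (QuotientGroup.mk' Z).ker ≤ K := by
      rw [QuotientGroup.ker_mk']
      exact le_sup_right
    have hmap : K.map (QuotientGroup.mk' Z) = ⊤ := by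
      rw [hK, Subgroup.map_sup, MonoidHom.map_closure]
      refine top_le_iff.mp ?_
      rw [← huv]
      refine le_trans ((Subgroup.closure_le _).mpr ?_) le_sup_left
      rintro w hw
      rcases hw with rfl | rfl
      · exact Subgroup.subset_closure (by simp [Set.image_insert_eq])
      · exact Subgroup.subset_closure (by simp [Set.image_insert_eq])
    calc K = (K.map (QuotientGroup.mk' Z)).comap (QuotientGroup.mk' Z) :=
            (Subgroup.comap_map_eq_self hker).symm
      _ = ⊤ := by rw [hmap, Subgroup.comap_top]
  -- the quotient by H is commutative
  have hRcomm : ∀ r s : P ⧸ H, r * s = s * r := by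
    set π := QuotientGroup.mk' H with hπ
    set S : Set (P ⧸ H) := π '' ({x, y} ∪ (Z : Set P)) with hS
    have hSgen : Subgroup.closure S = ⊤ := by
      rw [hS, ← MonoidHom.map_closure, Subgroup.closure_union, Subgroup.closure_eq,
        hgenP, Subgroup.map_top_of_surjective _ (QuotientGroup.mk'_surjective H)]
    have hPcomm2 : ∀ a ∈ ({x, y} ∪ (Z : Set P)), ∀ b ∈ ({x, y} ∪ (Z : Set P)),
        ⁅a, b⁆ ∈ H := by
      rintro a ha b hb
      rcases ha with ha | ha
      · rcases hb with hb | hb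
        · rcases ha with rfl | rfl <;> rcases hb with rfl | rfl
          · rw [commutatorElement_self]; exact H.one_mem
          · exact Subgroup.mem_zpowers c
          · rw [← commutatorElement_inv]
            exact H.inv_mem (Subgroup.mem_zpowers _)
          · rw [commutatorElement_self]; exact H.one_mem
        · have h1' : ⁅a, b⁆ = 1 :=
            commutatorElement_eq_one_iff_mul_comm.mpr
              (Subgroup.mem_center_iff.mp hb a)
          rw [h1']; exact H.one_mem
      · have h1' : ⁅a, b⁆ = 1 :=
          commutatorElement_eq_one_iff_mul_comm.mpr
            (Subgroup.mem_center_iff.mp ha b).symm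
        rw [h1']; exact H.one_mem
    have hSC : S ⊆ Subgroup.centralizer S := by
      rintro s ⟨a, ha, rfl⟩
      refine Subgroup.mem_centralizer_iff.mpr ?_
      rintro t ⟨b, hb, rfl⟩
      rw [← commutatorElement_eq_one_iff_mul_comm, ← map_commutatorElement,
        ← MonoidHom.mem_ker, hπ, QuotientGroup.ker_mk']
      exact hPcomm2 b hb a ha
    have hcent : ∀ r : P ⧸ H, r ∈ Subgroup.centralizer S := by
      intro r
      have hle : Subgroup.closure S ≤ Subgroup.centralizer S :=
        (Subgroup.closure_le _).mpr hSC
      exact hle (hSgen ▸ Subgroup.mem_top r)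
    have hScenter : S ⊆ Subgroup.center (P ⧸ H) := by
      intro s hs
      exact Subgroup.mem_center_iff.mpr fun g =>
        (Subgroup.mem_centralizer_iff.mp (hcent g) s hs).symm
    intro r s
    have hs : s ∈ Subgroup.center (P ⧸ H) := by
      have hle : Subgroup.closure S ≤ Subgroup.center (P ⧸ H) :=
        (Subgroup.closure_le _).mpr hScenter
      exact hle (hSgen ▸ Subgroup.mem_top s)
    exact Subgroup.mem_center_iff.mp hs r
  -- the commutator subgroup equals H
  have hcommH : commutator P = H := by
    apply le_antisymm
    · rw [_root_.commutator_def, Subgroup.commutator_le]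
      intro g _ h _
      have h1' : (QuotientGroup.mk' H) ⁅g, h⁆ = 1 := by
        rw [map_commutatorElement, commutatorElement_eq_one_iff_mul_comm]
        exact hRcomm _ _
      rwa [← MonoidHom.mem_ker, QuotientGroup.ker_mk'] at h1'
    · rw [hH, Subgroup.zpowers_le]
      exact Subgroup.commutator_mem_commutator (mem_top x) (mem_top y)
  -- c has order p
  have hcp : c ^ p = 1 := by
    rw [hc, commutator_pow_aux hcc x y p, commutatorElement_eq_one_iff_mul_comm]
    have hyp : y ^ p ∈ Z := by
      have h1' : (QuotientGroup.mk' Z) (y ^ p) = 1 := by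
        rw [map_pow]
        exact hexp _
      rwa [← MonoidHom.mem_ker, QuotientGroup.ker_mk'] at h1'
    exact Subgroup.mem_center_iff.mp hyp x
  have hcne : c ≠ 1 := by
    intro hc1
    apply hnontriv
    rw [hcommH, hH, hc1, Subgroup.zpowers_one_eq_bot]
  have hordc : orderOf c = p := by
    have hdvd : orderOf c ∣ p := orderOf_dvd_iff_pow_eq_one.mpr hcp
    rcases (Nat.dvd_prime hp).mp hdvd with h1' | h1'
    · exact absurd (orderOf_eq_one_iff.mp h1') hcne
    · exact h1'
  have hcardcomm : Nat.card (commutator P) = p := by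
    rw [hcommH, hH, Nat.card_zpowers, hordc]
  have hcardZ : Nat.card Z = p := h2 ▸ hcardcomm
  -- construct the abelian maximal subgroup
  obtain ⟨Hp, hHp⟩ := Sylow.exists_subgroup_card_pow_prime (G := P ⧸ Z) p
    (n := 1) (by rw [hQcard, pow_one]; exact dvd_pow_self p two_ne_zero)
  rw [pow_one] at hHp
  set A := Hp.comap (QuotientGroup.mk' Z) with hA
  have hHpindex : Hp.index = p := by
    have hmi := Subgroup.card_mul_index Hp
    rw [hHp, hQcard] at hmi
    have : p * Hp.index = p * p := by rw [hmi]; ring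
    exact Nat.eq_of_mul_eq_mul_left hp.pos this
  have hAindex : A.index = p := by
    rw [hA, Subgroup.index_comap_of_surjective _ (QuotientGroup.mk'_surjective Z), hHpindex]
  have hcardA : Nat.card A = (Nat.card (commutator P)) ^ 2 := by
    have hmi := Subgroup.card_mul_index A
    have hmz := Subgroup.card_mul_index Z
    rw [hcardZ, hZind] at hmz
    rw [hAindex, ← hmz] at hmi
    have : Nat.card A * p = (p * p) * p := by rw [hmi]; ring
    have hcA : Nat.card A = p * p := Nat.eq_of_mul_eq_mul_right hp.pos this
    rw [hcA, hcardcomm]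
    ring
  -- A is commutative
  have hAZ : Z ≤ A := by
    intro z hz
    rw [hA, Subgroup.mem_comap]
    have h1' : (QuotientGroup.mk' Z) z = 1 := by
      rw [← MonoidHom.mem_ker, QuotientGroup.ker_mk']
      exact hz
    rw [h1']
    exact Hp.one_mem
  have hAcomm : IsMulCommutative A := by
    haveI : IsCyclic Hp := isCyclic_of_prime_card hHp
    set f : A →* Hp :=
      ((QuotientGroup.mk' Z).comp A.subtype).codRestrict Hp (fun a => a.2) with hf
    have hker : f.ker ≤ Subgroup.center A := by
      intro a ha
      have h1' : (QuotientGroup.mk' Z) (a : P) = 1 := by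
        have := congrArg (Subtype.val) (ha : f a = 1)
        exact this
      have haZ : (a : P) ∈ Z := by
        rwa [← MonoidHom.mem_ker, QuotientGroup.ker_mk'] at h1'
      refine Subgroup.mem_center_iff.mpr fun b => ?_
      ext
      exact Subgroup.mem_center_iff.mp haZ (b : P)
    have hcab : ∀ a b : A, a * b = b * a :=
      commutative_of_cyclic_center_quotient f hker
    exact ⟨⟨fun a b => hcab a b⟩⟩
  exact ⟨A, hAindex, hAcomm, hcardA⟩
end

section
/- Let a finite nilpotent group H act Frobeniusly and irreducibly on an elementary abelian p-group V of order p^n, and suppose |H| = (p^n − 1)/d where d divides p − 1. If there exists a Zsigmondy prime divisor of p^n − 1 (a prime q dividing p^n − 1 but not dividing p^m − 1 for all 1 ≤ m < n), then H is cyclic of order (p^n − 1)/d. -/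
open Polynomial

lemma frob_aux {p : ℕ} [Fact p.Prime] {H V : Type*} [Group H] [Finite H]
    [AddCommGroup V] [Module (ZMod p) V] [Finite V] [Nontrivial V]
    (ρ : H →* (V ≃ₗ[ZMod p] V))
    (hfrob : ∀ h : H, h ≠ 1 → ∀ v : V, ρ h v = v → v = 0)
    (L : Type*) [Field L] [Finite L]
    (θ : L →+* Module.End (ZMod p) V)
    (hcard : Nat.card L = Nat.card V)
    (hcomm : ∀ (h : H) (c : L) (v : V), θ c (ρ h v) = ρ h (θ c v)) :
    IsCyclic H := by
  obtain ⟨v₀, hv₀⟩ := exists_ne (0 : V)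
  set φ : L → V := fun c => θ c v₀ with hφ
  have hθinv : ∀ c : L, c ≠ 0 → ∀ v : V, θ c v = 0 → v = 0 := by
    intro c hc v hv
    have : θ c⁻¹ (θ c v) = v := by
      rw [← Module.End.mul_apply, ← map_mul, inv_mul_cancel₀ hc, map_one,
        Module.End.one_apply]
    rw [hv, map_zero] at this
    exact this.symm
  have hinj : Function.Injective φ := by
    intro c c' h
    by_contra hne
    have hsub : θ (c - c') v₀ = 0 := by
      simp only [map_sub, LinearMap.sub_apply]
      rw [show (θ c) v₀ = (θ c') v₀ from h, sub_self]
    exact hv₀ (hθinv _ (sub_ne_zero.mpr hne) _ hsub)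
  have hbij : Function.Bijective φ :=
    (Nat.bijective_iff_injective_and_card φ).mpr ⟨hinj, hcard⟩
  set E := Equiv.ofBijective φ hbij with hE
  have hEapp : ∀ c : L, φ (E.symm (φ c)) = φ c := fun c => by
    show E (E.symm (φ c)) = φ c
    exact E.apply_symm_apply _
  have hφE : ∀ v : V, φ (E.symm v) = v := fun v => E.apply_symm_apply v
  set f : H → L := fun h => E.symm (ρ h v₀) with hf
  have hval : ∀ h : H, θ (f h) v₀ = ρ h v₀ := fun h => hφE (ρ h v₀)
  have hmul : ∀ h₁ h₂ : H, f (h₁ * h₂) = f h₁ * f h₂ := by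
    intro h₁ h₂
    apply hinj
    show θ (f (h₁ * h₂)) v₀ = θ (f h₁ * f h₂) v₀
    calc θ (f (h₁ * h₂)) v₀ = ρ (h₁ * h₂) v₀ := hval _
      _ = ρ h₁ (ρ h₂ v₀) := by rw [map_mul]; rfl
      _ = ρ h₁ (θ (f h₂) v₀) := by rw [hval]
      _ = θ (f h₂) (ρ h₁ v₀) := (hcomm h₁ (f h₂) v₀).symm
      _ = θ (f h₂) (θ (f h₁) v₀) := by rw [hval]
      _ = θ (f h₂ * f h₁) v₀ := by rw [map_mul, Module.End.mul_apply]
      _ = θ (f h₁ * f h₂) v₀ := by rw [mul_comm]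
  have hone : f 1 = 1 := by
    apply hinj
    show θ (f 1) v₀ = θ 1 v₀
    rw [hval, map_one, map_one]; rfl
  let F : H →* L := { toFun := f, map_one' := hone, map_mul' := hmul }
  have hFinj : Function.Injective F := by
    rw [injective_iff_map_eq_one]
    intro h hh
    by_contra hne
    have : θ (f h) v₀ = θ 1 v₀ := by rw [show f h = 1 from hh]
    rw [hval, map_one] at this
    replace this : ρ h v₀ = v₀ := this
    exact hv₀ (hfrob h hne v₀ this)
  exact isCyclic_of_subgroup_isDomain F hFinj


/-- In a nontrivial finite `q`-group, there is a central element of order `q`. -/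
lemma exists_central_orderOf_eq {q : ℕ} (hq : q.Prime) {P : Type*} [Group P] [Finite P]
    [Nontrivial P] (hP : IsPGroup q P) :
    ∃ y : P, y ∈ Subgroup.center P ∧ orderOf y = q := by
  haveI : Fact q.Prime := ⟨hq⟩
  haveI : Nontrivial (Subgroup.center P) := hP.center_nontrivial
  have hZ : IsPGroup q (Subgroup.center P) := hP.to_subgroup _
  have hdvd : q ∣ Nat.card (Subgroup.center P) := by
    obtain ⟨k, hk⟩ := hZ.exists_card_eq
    rw [hk]
    refine dvd_pow_self q ?_
    rintro rfl
    rw [pow_zero] at hk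
    exact (Finite.one_lt_card (α := Subgroup.center P)).ne' hk
  obtain ⟨y, hy⟩ := exists_prime_orderOf_dvd_card' (G := Subgroup.center P) q hdvd
  refine ⟨(y : P), y.2, ?_⟩
  rw [← hy]
  exact orderOf_injective (Subgroup.center P).subtype (Subgroup.subtype_injective _) y

/-- In a finite nilpotent group, every prime dividing the order has a central element
of that order. -/
lemma exists_central_of_prime_dvd {G : Type*} [Group G] [Finite G] [Group.IsNilpotent G]
    {q : ℕ} (hq : q.Prime) (hdvd : q ∣ Nat.card G) :
    ∃ x : G, x ∈ Subgroup.center G ∧ orderOf x = q := by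
  haveI : Fact q.Prime := ⟨hq⟩
  have hnormal : ∀ (r : ℕ) (_ : Fact r.Prime) (P : Sylow r G), (P : Subgroup G).Normal :=
    ((isNilpotent_of_finite_tfae (G := G)).out 0 3).mp (inferInstance : Group.IsNilpotent G)
  let e := Sylow.directProductOfNormal (G := G) fun {r : ℕ} [inst : Fact r.Prime] (P : Sylow r G) => hnormal r inst P
  -- the chosen element in each Sylow subgroup
  classical
  let w : ∀ (s : (Nat.card G).primeFactors) (P : Sylow (s : ℕ) G), (P : Subgroup G) :=
    fun s P =>
      if h : ∃ y : (P : Subgroup G), y ∈ Subgroup.center (P : Subgroup G) ∧ orderOf y = q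
      then h.choose else 1
  have hw : ∀ (s : (Nat.card G).primeFactors) (P : Sylow (s : ℕ) G),
      (w s P ∈ Subgroup.center (P : Subgroup G)) ∧ (w s P) ^ q = 1 := by
    intro s P
    by_cases h : ∃ y : (P : Subgroup G), y ∈ Subgroup.center (P : Subgroup G) ∧ orderOf y = q
    · have hspec := h.choose_spec
      simp only [w, dif_pos h]
      refine ⟨hspec.1, ?_⟩
      have hpow := pow_orderOf_eq_one h.choose
      rwa [hspec.2] at hpow
    · simp only [w, dif_neg h]
      exact ⟨Subgroup.one_mem _, one_pow q⟩
  have hcard_ne : Nat.card G ≠ 0 := Nat.card_pos.ne'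
  have hqmem : q ∈ (Nat.card G).primeFactors := Nat.mem_primeFactors.mpr ⟨hq, hdvd, hcard_ne⟩
  set t : ∀ s : (Nat.card G).primeFactors, ∀ P : Sylow (s : ℕ) G, (P : Subgroup G) :=
    fun s P => w s P with ht
  have htq : t ^ q = 1 := by
    funext s P
    exact (hw s P).2
  have htcent : ∀ g, g * t = t * g := by
    intro g
    funext s P
    simp only [Pi.mul_apply]
    exact Subgroup.mem_center_iff.mp (hw s P).1 (g s P)
  -- the q-component is an element of order q
  have hP0 : ∀ P : Sylow q G, ∃ y : (P : Subgroup G),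
      y ∈ Subgroup.center (P : Subgroup G) ∧ orderOf y = q := by
    intro P
    have hcardP : Nat.card (P : Subgroup G) = q ^ (Nat.card G).factorization q :=
      Sylow.card_eq_multiplicity P
    have hpos : 0 < (Nat.card G).factorization q :=
      Nat.Prime.factorization_pos_of_dvd hq hcard_ne hdvd
    have : 1 < Nat.card (P : Subgroup G) := by
      rw [hcardP]; exact Nat.one_lt_pow hpos.ne' hq.one_lt
    haveI : Nontrivial (P : Subgroup G) := Finite.one_lt_card_iff_nontrivial.mp this
    exact exists_central_orderOf_eq hq P.isPGroup'
  have htne : t ≠ 1 := by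
    intro h
    obtain ⟨P₀⟩ := (inferInstance : Nonempty (Sylow q G))
    have h1 : w ⟨q, hqmem⟩ P₀ = 1 := congrFun (congrFun h ⟨q, hqmem⟩) P₀
    have h2 := hP0 P₀
    rw [show w ⟨q, hqmem⟩ P₀ = h2.choose from dif_pos h2] at h1
    have := h2.choose_spec.2
    rw [h1, orderOf_one] at this
    exact hq.one_lt.ne this
  refine ⟨e t, ?_, ?_⟩
  · rw [Subgroup.mem_center_iff]
    intro g
    have : e (e.symm g * t) = e (t * e.symm g) := by rw [htcent]
    rw [map_mul, map_mul, e.apply_symm_apply] at this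
    exact this
  · refine orderOf_eq_prime ?_ ?_
    · rw [← map_pow, htq, map_one]
    · intro h1
      exact htne (e.injective (by rw [h1, map_one]))



section helpers

lemma commute_aeval {R A : Type*} [CommSemiring R] [Semiring A] [Algebra R A] {a b : A}
    (h : Commute a b) (g : R[X]) : Commute a (Polynomial.aeval b g) := by
  induction g using Polynomial.induction_on' with
  | add f g hf hg => rw [map_add]; exact hf.add_right hg
  | monomial i r =>
    rw [Polynomial.aeval_monomial]
    exact (Commute.symm (Algebra.commute_algebraMap_left r a)).mul_right (h.pow_right i)

end helpers


/-- Let a finite nilpotent group `H` act Frobeniusly and irreducibly on an elementary abelian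
`p`-group `V` of order `p^n`, with `|H| = (p^n − 1)/d` where `d ∣ p − 1`.  If a Zsigmondy prime
divisor of `p^n − 1` exists, then `H` is cyclic (of order `(p^n − 1)/d`). -/
theorem cyclic_of_zsigmondy
    {p n d : ℕ} [Fact p.Prime] (hn : 1 ≤ n) {H V : Type*} [Group H] [Finite H]
    [Group.IsNilpotent H] [AddCommGroup V] [Module (ZMod p) V] [Finite V]
    (ρ : H →* (V ≃ₗ[ZMod p] V))
    (hfrob : ∀ h : H, h ≠ 1 → ∀ v : V, ρ h v = v → v = 0)
    (hirr : ∀ W : Submodule (ZMod p) V, (∀ h : H, ∀ v ∈ W, ρ h v ∈ W) → W = ⊥ ∨ W = ⊤)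
    (hcardV : Nat.card V = p ^ n)
    (hd : d ∣ p - 1) (hcardH : Nat.card H = (p ^ n - 1) / d)
    (hzsig : ∃ q : ℕ, q.Prime ∧ q ∣ p ^ n - 1 ∧ ∀ m, 1 ≤ m → m < n → ¬ q ∣ p ^ m - 1) :
    IsCyclic H := by
  have hp := (Fact.out : p.Prime)
  -- basic facts
  haveI : Nontrivial V := by
    apply Finite.one_lt_card_iff_nontrivial.mp
    rw [hcardV]
    exact Nat.one_lt_pow (by omega) hp.one_lt
  -- the representation as endomorphisms
  set ρ' : H →* Module.End (ZMod p) V :=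
    (Units.coeHom _).comp (((LinearMap.GeneralLinearGroup.generalLinearEquiv (ZMod p) V).symm.toMonoidHom).comp ρ)
    with hρ'def
  have hρ' : ∀ (h : H) (v : V), ρ' h v = ρ h v := by
    intro h v
    have := LinearMap.GeneralLinearGroup.generalLinearEquiv_to_linearMap (R := ZMod p) (M := V)
      ((LinearMap.GeneralLinearGroup.generalLinearEquiv (ZMod p) V).symm (ρ h))
    rw [MulEquiv.apply_symm_apply] at this
    exact (DFunLike.congr_fun this v).symm
  rcases eq_or_lt_of_le hn with hn1 | hn2
  · -- case n = 1 : V is 1-dimensional, use scalars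
    apply frob_aux ρ hfrob (ZMod p) (algebraMap (ZMod p) (Module.End (ZMod p) V))
    · rw [Nat.card_zmod, hcardV, ← hn1, pow_one]
    · intro h c v
      rw [Module.algebraMap_end_apply, Module.algebraMap_end_apply, map_smul]
  · -- case n ≥ 2
    obtain ⟨q, hq, hqdvd, hqmin⟩ := hzsig
    haveI : Fact q.Prime := ⟨hq⟩
    -- q divides the order of H
    have hd' : d ∣ p ^ n - 1 := hd.trans (by simpa using Nat.sub_dvd_pow_sub_pow p 1 n)
    have hqnd : ¬ q ∣ d := by
      intro hdq
      exact hqmin 1 le_rfl hn2 (by simpa using hdq.trans hd)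
    have hq_card : q ∣ Nat.card H := by
      rw [hcardH]
      have hmul : d * ((p ^ n - 1) / d) = p ^ n - 1 := Nat.mul_div_cancel' hd'
      have : q ∣ d * ((p ^ n - 1) / d) := by rw [hmul]; exact hqdvd
      exact (hq.dvd_mul.mp this).resolve_left hqnd
    -- a central element x of order q
    obtain ⟨x, hx_center, hx_ord⟩ := exists_central_of_prime_dvd hq hq_card
    have hxne : x ≠ 1 := by
      intro h
      rw [h, orderOf_one] at hx_ord
      exact hq.one_lt.ne' (hx_ord ▸ rfl)
    set e' : Module.End (ZMod p) V := ρ' x with he'def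
    have he'q : e' ^ q = 1 := by
      rw [← map_pow, ← hx_ord, pow_orderOf_eq_one, map_one]
    haveI hfinEnd : Finite (Module.End (ZMod p) V) :=
      Finite.of_injective _ (DFunLike.coe_injective (F := Module.End (ZMod p) V))
    have hint : IsIntegral (ZMod p) e' := IsIntegral.of_finite (ZMod p) e'
    set μ : (ZMod p)[X] := minpoly (ZMod p) e' with hμdef
    have hμ_monic : μ.Monic := minpoly.monic hint
    have hμ_ne : μ ≠ 0 := hμ_monic.ne_zero
    have hμ_dvd : μ ∣ X ^ q - 1 := by
      apply minpoly.dvd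
      rw [map_sub, map_pow, aeval_X, map_one, he'q, sub_self]
    -- 1 is not a root of μ
    have h1root : ¬ μ.IsRoot 1 := by
      intro hroot
      have hev : Module.End.HasEigenvalue e' 1 := Module.End.hasEigenvalue_of_isRoot hroot
      obtain ⟨v, hv⟩ := hev.exists_hasEigenvector
      have hev1 : e' v = v := by
        have := hv.apply_eq_smul
        rwa [one_smul] at this
      exact hv.right (hfrob x hxne v (by rw [← hρ']; exact hev1))
    -- the dimension of V is n
    haveI : NeZero p := ⟨hp.pos.ne'⟩
    have hfr : Module.finrank (ZMod p) V = n := by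
      haveI := Fintype.ofFinite V
      have hc := Module.card_eq_pow_finrank (K := ZMod p) (V := V)
      rw [ZMod.card] at hc
      rw [← Nat.card_eq_fintype_card, hcardV] at hc
      exact (Nat.pow_right_injective hp.two_le hc.symm)
    -- degree bound for μ
    have hdegle : μ.natDegree ≤ n := by
      have h1 : μ ∣ LinearMap.charpoly e' := LinearMap.minpoly_dvd_charpoly e'
      have h2 : (LinearMap.charpoly e').natDegree = n := by
        rw [LinearMap.charpoly_natDegree, hfr]
      exact h2 ▸ Polynomial.natDegree_le_of_dvd h1 (LinearMap.charpoly_monic e').ne_zero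
    -- every irreducible factor of μ has degree at least n
    have hclaim : ∀ π : (ZMod p)[X], Irreducible π → π ∣ μ → n ≤ π.natDegree := by
      intro π hπ hπd
      by_contra hlt
      push_neg at hlt
      haveI : Fact (Irreducible π) := ⟨hπ⟩
      have hπ0 : π ≠ 0 := hπ.ne_zero
      set L := AdjoinRoot π with hLdef
      haveI : Module.Finite (ZMod p) L := (AdjoinRoot.powerBasis hπ0).finite
      haveI : Finite L := Module.finite_of_finite (ZMod p)
      have hfrL : Module.finrank (ZMod p) L = π.natDegree := by
        rw [(AdjoinRoot.powerBasis hπ0).finrank]; rfl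
      have hcardL : Nat.card L = p ^ π.natDegree := by
        haveI := Fintype.ofFinite L
        have hc := Module.card_eq_pow_finrank (K := ZMod p) (V := L)
        rw [ZMod.card, hfrL] at hc
        rw [Nat.card_eq_fintype_card, hc]
      set ζ : L := AdjoinRoot.root π with hζdef
      have hζq : ζ ^ q = 1 := by
        have hdz : aeval ζ ((X : (ZMod p)[X]) ^ q - 1) = 0 := by
          rw [AdjoinRoot.aeval_eq, AdjoinRoot.mk_eq_zero]
          exact hπd.trans hμ_dvd
        rw [map_sub, map_pow, aeval_X, map_one, sub_eq_zero] at hdz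
        exact hdz
      have hζ1 : ζ ≠ 1 := by
        intro h
        have h0 : aeval ζ π = 0 := by rw [AdjoinRoot.aeval_eq, AdjoinRoot.mk_self]
        rw [h, aeval_def, Polynomial.eval₂_at_one] at h0
        have hev1 : π.eval 1 = 0 := by
          apply (algebraMap (ZMod p) L).injective
          rw [h0, map_zero]
        apply h1root
        have := Polynomial.eval_dvd (x := (1 : ZMod p)) hπd
        rw [hev1, zero_dvd_iff] at this
        exact this
      have hζord : orderOf ζ = q := orderOf_eq_prime hζq hζ1
      have hζ0 : ζ ≠ 0 := by
        intro h
        rw [h, zero_pow hq.ne_zero] at hζq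
        exact zero_ne_one hζq
      have hqdvdL : q ∣ p ^ π.natDegree - 1 := by
        have h1 : orderOf (Units.mk0 ζ hζ0) = q := by
          rw [← orderOf_units, Units.val_mk0, hζord]
        have h2 : q ∣ Nat.card Lˣ := h1 ▸ orderOf_dvd_natCard _
        rwa [Nat.card_units, hcardL] at h2
      have hk1 : 1 ≤ π.natDegree := hπ.natDegree_pos
      exact hqmin π.natDegree hk1 hlt hqdvdL
    -- μ is irreducible of degree n
    have hμpos : 0 < μ.natDegree := minpoly.natDegree_pos hint
    obtain ⟨π, hπ_irr, hπ_dvd⟩ :=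
      WfDvdMonoid.exists_irreducible_factor
        (Polynomial.not_isUnit_of_natDegree_pos μ hμpos) hμ_ne
    have hπn : n ≤ π.natDegree := hclaim π hπ_irr hπ_dvd
    have hπle : π.natDegree ≤ μ.natDegree := Polynomial.natDegree_le_of_dvd hπ_dvd hμ_ne
    have hμdeg : μ.natDegree = n := le_antisymm hdegle (hπn.trans hπle)
    have hμ_irr : Irreducible μ := by
      obtain ⟨c, hc⟩ := hπ_dvd
      have hc0 : c ≠ 0 := by rintro rfl; rw [mul_zero] at hc; exact hμ_ne hc
      have hdegc : c.natDegree = 0 := by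
        have := Polynomial.natDegree_mul hπ_irr.ne_zero hc0
        rw [← hc, hμdeg] at this
        omega
      obtain ⟨a, rfl⟩ := Polynomial.natDegree_eq_zero.mp hdegc
      have ha : a ≠ 0 := fun h => hc0 (by rw [h, map_zero])
      have hassoc : Associated π μ := by
        rw [hc]
        exact associated_mul_unit_right π _ (Polynomial.isUnit_C.mpr (isUnit_iff_ne_zero.mpr ha))
      exact hassoc.irreducible hπ_irr
    haveI : Fact (Irreducible μ) := ⟨hμ_irr⟩
    set L := AdjoinRoot μ with hLdef
    haveI : Module.Finite (ZMod p) L := (AdjoinRoot.powerBasis hμ_ne).finite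
    haveI : Finite L := Module.finite_of_finite (ZMod p)
    have hcardL : Nat.card L = Nat.card V := by
      haveI := Fintype.ofFinite L
      have hc := Module.card_eq_pow_finrank (K := ZMod p) (V := L)
      rw [ZMod.card, (AdjoinRoot.powerBasis hμ_ne).finrank,
        show (AdjoinRoot.powerBasis hμ_ne).dim = μ.natDegree from rfl, hμdeg] at hc
      rw [Nat.card_eq_fintype_card, hc, hcardV]
    -- the ring hom from L into the endomorphisms of V
    have h0 : ∀ a : (ZMod p)[X], a ∈ Ideal.span {μ} → (aeval e').toRingHom a = 0 := by
      intro a ha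
      rw [Ideal.mem_span_singleton] at ha
      obtain ⟨t, rfl⟩ := ha
      simp only [AlgHom.toRingHom_eq_coe, RingHom.coe_coe, map_mul]
      rw [minpoly.aeval, zero_mul]
    set θ : L →+* Module.End (ZMod p) V :=
      Ideal.Quotient.lift (Ideal.span {μ}) (aeval e').toRingHom h0 with hθdef
    have hθmk : ∀ g : (ZMod p)[X], θ (AdjoinRoot.mk μ g) = aeval e' g := fun g =>
      Ideal.Quotient.lift_mk _ _ _
    -- θ commutes with the action of H
    have hcommL : ∀ (h : H) (c : L) (v : V), θ c (ρ h v) = ρ h (θ c v) := by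
      intro h c v
      obtain ⟨g, rfl⟩ := AdjoinRoot.mk_surjective c
      have hcx : Commute (ρ' h) e' := by
        rw [he'def, Commute, SemiconjBy, ← map_mul, ← map_mul,
          Subgroup.mem_center_iff.mp hx_center h]
      have hcg : Commute (ρ' h) (aeval e' g) := commute_aeval hcx g
      rw [hθmk, ← hρ', ← hρ']
      calc (aeval e' g) (ρ' h v) = ((aeval e' g) * ρ' h) v := rfl
        _ = (ρ' h * (aeval e' g)) v := by rw [hcg.eq]
        _ = ρ' h ((aeval e' g) v) := rfl
    exact frob_aux ρ hfrob L θ hcardL hcommL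
end

section
/- Zsigmondy: Let p be a prime and n a positive integer. Then there exists a prime q dividing p^n − 1 that does not divide p^m − 1 for any 1 ≤ m < n, except in the cases: p^n = 2; n = 2 and p is a Mersenne prime (i.e., p + 1 is a power of 2); or p^n = 2^6. -/
open Polynomial Finset ArithmeticFunction
open scoped ArithmeticFunction.Moebius

section ZsigmondyAux

lemma zs_dvd_iff_order {p q M : ℕ} (hq : q.Prime) (hp : 1 ≤ p) :
    q ∣ p ^ M - 1 ↔ orderOf ((p : ZMod q)) ∣ M := by
  haveI := Fact.mk hq
  rw [← ZMod.natCast_eq_zero_iff]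
  have h1 : ((p ^ M - 1 : ℕ) : ZMod q) = (p : ZMod q) ^ M - 1 := by
    have : 1 ≤ p ^ M := Nat.one_le_pow _ _ hp
    push_cast [Nat.cast_sub this]
    ring
  rw [h1, sub_eq_zero, ← orderOf_dvd_iff_pow_eq_one]

lemma zs_order_eq {p q n : ℕ} (hq : q.Prime) (hn : 0 < n)
    (hdvd : (q : ℤ) ∣ (cyclotomic n ℤ).eval (p : ℤ)) :
    n = q ^ (n.factorization q) * orderOf ((p : ZMod q)) := by
  haveI := Fact.mk hq
  set k := n.factorization q with hk
  set m := n / q ^ k with hm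
  have hqm : ¬ q ∣ m := Nat.not_dvd_ordCompl hq hn.ne'
  have hnm : n = q ^ k * m := (Nat.ordProj_mul_ordCompl_eq_self n q).symm
  haveI : NeZero ((m : ZMod q)) := ⟨by
    rwa [Ne, ZMod.natCast_eq_zero_iff]⟩
  have hroot : IsRoot (cyclotomic (q ^ k * m) (ZMod q)) ((p : ZMod q)) := by
    rw [← hnm, IsRoot.def]
    have h2 : (cyclotomic n (ZMod q)) = (cyclotomic n ℤ).map (Int.castRingHom (ZMod q)) := by
      rw [map_cyclotomic]
    rw [h2, ← Int.cast_natCast (R := ZMod q), eval_intCast_map]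
    have h3 := (ZMod.intCast_zmod_eq_zero_iff_dvd ((cyclotomic n ℤ).eval (p : ℤ)) q).mpr hdvd
    exact_mod_cast h3
  have hprim : IsPrimitiveRoot ((p : ZMod q)) m :=
    (isRoot_cyclotomic_prime_pow_mul_iff_of_charP).mp hroot
  rw [hnm, ← hprim.eq_orderOf]

lemma zs_weierstrass {T : Finset ℕ} {f : ℕ → ℝ} (h0 : ∀ d ∈ T, 0 ≤ f d)
    (h1 : ∀ d ∈ T, f d ≤ 1) :
    1 - ∑ d ∈ T, f d ≤ ∏ d ∈ T, (1 - f d) := by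
  classical
  induction T using Finset.induction_on with
  | empty => simp
  | @insert a s hx ih =>
    rw [Finset.prod_insert hx, Finset.sum_insert hx]
    have ha0 := h0 a (mem_insert_self a s)
    have ha1 := h1 a (mem_insert_self a s)
    have ihs := ih (fun d hd => h0 d (mem_insert_of_mem hd)) (fun d hd => h1 d (mem_insert_of_mem hd))
    have hs0 : 0 ≤ ∑ d ∈ s, f d := Finset.sum_nonneg (fun d hd => h0 d (mem_insert_of_mem hd))
    nlinarith [Finset.prod_nonneg (fun d (hd : d ∈ s) => sub_nonneg.mpr (h1 d (mem_insert_of_mem hd)))]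

lemma zs_geom_tail {T : Finset ℕ} (hT : ∀ d ∈ T, 2 ≤ d) :
    ∑ d ∈ T, ((2 : ℝ)⁻¹) ^ d < 1 / 2 := by
  rcases T.eq_empty_or_nonempty with rfl | hne
  · norm_num
  · set N := T.max' hne with hN
    have hsub : T ⊆ Finset.Ico 2 (N + 1) := by
      intro d hd
      simp only [Finset.mem_Ico]
      exact ⟨hT d hd, Nat.lt_succ_of_le (T.le_max' d hd)⟩
    calc ∑ d ∈ T, ((2 : ℝ)⁻¹) ^ d ≤ ∑ d ∈ Finset.Ico 2 (N + 1), ((2 : ℝ)⁻¹) ^ d := by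
          apply Finset.sum_le_sum_of_subset_of_nonneg hsub
          intro i _ _; positivity
      _ = (((2:ℝ)⁻¹) ^ (N + 1) - ((2:ℝ)⁻¹) ^ 2) / ((2:ℝ)⁻¹ - 1) := by
          rw [geom_sum_Ico (by norm_num) (by
            have := hT _ (T.max'_mem hne); omega)]
      _ < 1 / 2 := by
          rw [div_lt_iff_of_neg (by norm_num)]
          have : (0:ℝ) < ((2:ℝ)⁻¹) ^ (N + 1) := by positivity
          nlinarith

lemma zs_W_bound {T : Finset ℕ} (hT : ∀ d ∈ T, 1 ≤ d) :
    (1 : ℝ) / 4 < ∏ d ∈ T, (1 - ((2 : ℝ)⁻¹) ^ d) := by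
  classical
  set T' := T.erase 1 with hT'
  have hT'2 : ∀ d ∈ T', 2 ≤ d := by
    intro d hd
    have h1 := Finset.ne_of_mem_erase hd
    have h2 := hT d (Finset.mem_of_mem_erase hd)
    omega
  have hW : (1:ℝ)/2 < ∏ d ∈ T', (1 - ((2 : ℝ)⁻¹) ^ d) := by
    have h1 := zs_weierstrass (T := T') (f := fun d => ((2:ℝ)⁻¹) ^ d)
      (fun d _ => by positivity) (fun d _ => by
        have : ((2:ℝ)⁻¹) ^ d ≤ ((2:ℝ)⁻¹) ^ 0 := by
          apply pow_le_pow_of_le_one <;> norm_num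
        simpa using this)
    have h2 := zs_geom_tail hT'2
    linarith
  by_cases h1 : 1 ∈ T
  · have he : T = insert 1 T' := by
      rw [hT', Finset.insert_erase h1]
    rw [he, Finset.prod_insert (Finset.notMem_erase 1 T)]
    norm_num
    linarith
  · have he : T' = T := Finset.erase_eq_of_notMem h1
    rw [← he]
    linarith

lemma zs_mu_tri (a : ℕ) : μ a = 1 ∨ μ a = -1 ∨ μ a = 0 := by
  by_cases h : Squarefree a
  · rw [moebius_apply_of_squarefree h]
    rcases Nat.even_or_odd (cardFactors a) with he | ho
    · left; exact he.neg_one_pow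
    · right; left; exact ho.neg_one_pow
  · right; right; exact moebius_eq_zero_of_not_squarefree h

lemma zs_moebius_poly {n : ℕ} :
    cyclotomic n ℤ *
      ∏ i ∈ n.divisorsAntidiagonal.filter (fun i => μ i.1 = -1), (X ^ i.2 - 1) =
    ∏ i ∈ n.divisorsAntidiagonal.filter (fun i => μ i.1 = 1), (X ^ i.2 - 1) := by
  classical
  set K := RatFunc ℤ
  have hinj : Function.Injective (algebraMap ℤ[X] K) := IsFractionRing.injective ℤ[X] K
  apply hinj
  set u : ℕ × ℕ → K := fun i => algebraMap ℤ[X] K (X ^ i.2 - 1) with hu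
  have hne : ∀ i ∈ n.divisorsAntidiagonal, u i ≠ 0 := by
    intro i hi
    rw [hu, Ne, map_eq_zero_iff _ hinj]
    have h2 := (Nat.mem_divisorsAntidiagonal.mp hi).1
    have h3 := (Nat.mem_divisorsAntidiagonal.mp hi).2
    have h4 : 0 < i.2 := by
      rcases Nat.eq_zero_or_pos i.2 with h | h
      · exact absurd (by rw [← h2, h, mul_zero]) h3
      · exact h
    intro hzz
    have h5 := congrArg (Polynomial.eval 0) hzz
    simp [zero_pow h4.ne'] at h5
  have h := cyclotomic_eq_prod_X_pow_sub_one_pow_moebius (n := n) ℤ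
  have key : (∏ i ∈ n.divisorsAntidiagonal, u i ^ μ i.1) *
      (∏ i ∈ n.divisorsAntidiagonal, if μ i.1 = -1 then u i else 1) =
      ∏ i ∈ n.divisorsAntidiagonal, if μ i.1 = 1 then u i else 1 := by
    rw [← Finset.prod_mul_distrib]
    apply Finset.prod_congr rfl
    intro i hi
    rcases zs_mu_tri i.1 with h1 | h1 | h1 <;> rw [h1] <;> simp [zpow_neg_one, hne i hi] <;> exact inv_mul_cancel₀ (G₀ := RatFunc ℤ) (hne i hi)
  rw [← Finset.prod_filter, ← Finset.prod_filter] at key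
  rw [map_mul, map_prod, map_prod, h]
  exact key

lemma zs_totient_split {n : ℕ} (hn : 0 < n) :
    (∑ i ∈ n.divisorsAntidiagonal.filter (fun i => μ i.1 = 1), i.2) =
    n.totient + ∑ i ∈ n.divisorsAntidiagonal.filter (fun i => μ i.1 = -1), i.2 := by
  classical
  have h := (sum_eq_iff_sum_mul_moebius_eq (R := ℤ)
    (f := fun d => (d.totient : ℤ)) (g := fun d => (d : ℤ))).mp ?_ n hn
  · simp only [Int.cast_id] at h
    have key : ∑ x ∈ n.divisorsAntidiagonal, (μ x.1 : ℤ) * x.2 =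
        (∑ i ∈ n.divisorsAntidiagonal.filter (fun i => μ i.1 = 1), (i.2 : ℤ)) -
        (∑ i ∈ n.divisorsAntidiagonal.filter (fun i => μ i.1 = -1), (i.2 : ℤ)) := by
      rw [Finset.sum_filter, Finset.sum_filter, ← Finset.sum_sub_distrib]
      apply Finset.sum_congr rfl
      intro i _
      rcases zs_mu_tri i.1 with h1 | h1 | h1 <;> rw [h1] <;> push_cast <;> ring
    rw [key] at h
    have := sub_eq_iff_eq_add.mp h
    exact_mod_cast this
  · intro m hm
    exact_mod_cast Nat.sum_totient m

lemma zs_two_bound {n : ℕ} (hn : 0 < n) :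
    (2 : ℝ) ^ n.totient < 4 * (((cyclotomic n ℤ).eval 2 : ℤ) : ℝ) := by
  classical
  set D := n.divisorsAntidiagonal with hD
  set P := D.filter (fun i => μ i.1 = 1) with hP
  set N := D.filter (fun i => μ i.1 = -1) with hN
  have hd2 : ∀ i ∈ D, 1 ≤ i.2 := by
    intro i hi
    have h2 := (Nat.mem_divisorsAntidiagonal.mp hi).1
    have h3 := (Nat.mem_divisorsAntidiagonal.mp hi).2
    rcases Nat.eq_zero_or_pos i.2 with h | h
    · exact absurd (by rw [← h2, h, mul_zero]) h3
    · exact h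
  have hid : (((cyclotomic n ℤ).eval 2 : ℤ) : ℝ) * ∏ i ∈ N, ((2:ℝ) ^ i.2 - 1) =
      ∏ i ∈ P, ((2:ℝ) ^ i.2 - 1) := by
    have h := congrArg (fun f : ℤ[X] => ((f.eval 2 : ℤ) : ℝ)) (zs_moebius_poly (n := n))
    simpa [eval_prod, eval_pow, eval_mul] using h
  set AP := ∏ i ∈ P, ((2:ℝ) ^ i.2 - 1) with hAP
  set AN := ∏ i ∈ N, ((2:ℝ) ^ i.2 - 1) with hAN
  set SP := ∑ i ∈ P, i.2 with hSP
  set SN := ∑ i ∈ N, i.2 with hSN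
  have hNsub : N ⊆ D := Finset.filter_subset _ _
  have hPsub : P ⊆ D := Finset.filter_subset _ _
  have hANpos : 0 < AN := by
    apply Finset.prod_pos
    intro i hi
    have h1 := hd2 i (hNsub hi)
    have : (2:ℝ) ^ 1 ≤ 2 ^ i.2 := by
      apply pow_le_pow_right₀ (by norm_num) h1
    simp at this ⊢
    linarith
  have hANle : AN ≤ 2 ^ SN := by
    rw [hAN, hSN, ← Finset.prod_pow_eq_pow_sum]
    apply Finset.prod_le_prod
    · intro i hi
      have h2 : (1:ℝ) ≤ (2:ℝ) ^ i.2 := one_le_pow₀ (by norm_num)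
      linarith
    · intro i _
      linarith [ (by positivity : (0:ℝ) < (2:ℝ) ^ i.2) ]
  have hinj2 : ∀ x ∈ P, ∀ y ∈ P, x.2 = y.2 → x = y := by
    intro x hx y hy hxy
    have hx' := Nat.mem_divisorsAntidiagonal.mp (hPsub hx)
    have hy' := Nat.mem_divisorsAntidiagonal.mp (hPsub hy)
    have h1 : x.1 = y.1 := by
      have h1 : x.1 * x.2 = y.1 * x.2 := by rw [hx'.1, hxy, hy'.1]
      exact Nat.eq_of_mul_eq_mul_right (by have := hd2 x (hPsub hx); omega) h1
    exact Prod.ext h1 hxy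
  set T := P.image Prod.snd with hT
  have hWT : ∏ i ∈ P, (1 - ((2:ℝ)⁻¹) ^ i.2) = ∏ d ∈ T, (1 - ((2:ℝ)⁻¹) ^ d) := by
    rw [hT, Finset.prod_image hinj2]
  have hW : (1:ℝ)/4 < ∏ i ∈ P, (1 - ((2:ℝ)⁻¹) ^ i.2) := by
    rw [hWT]
    apply zs_W_bound
    intro d hd
    rw [hT, Finset.mem_image] at hd
    obtain ⟨i, hi, rfl⟩ := hd
    exact hd2 i (hPsub hi)
  have hAPgt : 2 ^ SP * (1/4 : ℝ) < AP := by
    have hfac : AP = 2 ^ SP * ∏ i ∈ P, (1 - ((2:ℝ)⁻¹) ^ i.2) := by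
      rw [hAP, hSP, ← Finset.prod_pow_eq_pow_sum, ← Finset.prod_mul_distrib]
      apply Finset.prod_congr rfl
      intro i _
      have : ((2:ℝ))^ i.2 ≠ 0 := by positivity
      field_simp
      rw [one_div, inv_pow, mul_sub, mul_one, mul_inv_cancel₀ this]
    rw [hfac]
    have : (0:ℝ) < 2 ^ SP := by positivity
    nlinarith [hW]
  have hSPN : SP = n.totient + SN := zs_totient_split hn
  have hfinal : (((cyclotomic n ℤ).eval 2 : ℤ) : ℝ) * AN > (2 ^ n.totient * (1/4)) * AN := by
    rw [hid]
    calc (2:ℝ) ^ n.totient * (1/4) * AN ≤ 2 ^ n.totient * (1/4) * 2 ^ SN := by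
          apply mul_le_mul_of_nonneg_left hANle (by positivity)
      _ = 2 ^ SP * (1/4) := by rw [hSPN, pow_add]; ring
      _ < AP := hAPgt
  have := (mul_lt_mul_iff_of_pos_right hANpos).mp hfinal
  linarith

lemma zs_geom_cong {q : ℕ} (hodd : Odd q) {x : ℤ}
    (hx : (q : ℤ) ∣ x - 1) :
    ∃ c : ℤ, ∑ i ∈ Finset.range q, x ^ i = q + q ^ 2 * c := by
  obtain ⟨a, ha⟩ := hx
  have hxa : x = 1 + q * a := by linarith
  have hterm : ∀ i : ℕ, ∃ b : ℤ, x ^ i = 1 + i * (q * a) + q ^ 2 * b := by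
    intro i
    induction i with
    | zero => exact ⟨0, by simp⟩
    | succ j ih =>
      obtain ⟨b, hb⟩ := ih
      refine ⟨j * a ^ 2 + b + q * a * b, ?_⟩
      rw [pow_succ, hb, hxa]
      push_cast
      ring
  choose b hb using hterm
  obtain ⟨c0, hc0⟩ : ∃ c0, q - 1 = 2 * c0 := by
    rcases hodd with ⟨t, ht⟩; exact ⟨t, by omega⟩
  have hsum_nat : (∑ i ∈ Finset.range q, i) = q * c0 := by
    have h2 := Finset.sum_range_id_mul_two q
    rw [hc0] at h2
    have h3 : (∑ i ∈ Finset.range q, i) * 2 = (q * c0) * 2 := by rw [h2]; ring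
    exact Nat.eq_of_mul_eq_mul_right (by norm_num) h3
  have hz : ∑ i ∈ Finset.range q, (i : ℤ) = ((q * c0 : ℕ) : ℤ) := by
    rw [← Nat.cast_sum, hsum_nat]
  refine ⟨a * c0 + ∑ i ∈ Finset.range q, b i, ?_⟩
  calc ∑ i ∈ Finset.range q, x ^ i
      = ∑ i ∈ Finset.range q, (1 + (i : ℤ) * (q * a) + q ^ 2 * b i) :=
        Finset.sum_congr rfl (fun i _ => hb i)
    _ = q + (∑ i ∈ Finset.range q, (i : ℤ)) * (q * a) + q ^ 2 * ∑ i ∈ Finset.range q, b i := by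
        rw [Finset.sum_add_distrib, Finset.sum_add_distrib, Finset.sum_const,
          Finset.card_range, ← Finset.sum_mul, ← Finset.mul_sum]
        push_cast
        ring
    _ = q + q ^ 2 * (a * c0 + ∑ i ∈ Finset.range q, b i) := by
        rw [hz]; push_cast; ring



end ZsigmondyAux

set_option maxHeartbeats 1000000 in
/-- Zsigmondy's theorem for `p^n − 1`: if `p` is a prime and `n ≥ 1`, then there is a prime `q`
dividing `p^n − 1` but not dividing `p^m − 1` for any `1 ≤ m < n`, except when `p^n = 2`,
when `n = 2` and `p` is a Mersenne prime (`p + 1` a power of `2`), or when `p^n = 2^6`. -/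
theorem zsigmondy_psub_one
    {p n : ℕ} (hp : p.Prime) (hn : 1 ≤ n)
    (h1 : ¬ (p = 2 ∧ n = 1))
    (h2 : ¬ (n = 2 ∧ ∃ k : ℕ, p + 1 = 2 ^ k))
    (h3 : ¬ (p = 2 ∧ n = 6)) :
    ∃ q : ℕ, q.Prime ∧ q ∣ p ^ n - 1 ∧ ∀ m, 1 ≤ m → m < n → ¬ q ∣ p ^ m - 1 := by
  have hp2 : 2 ≤ p := hp.two_le
  -- case n = 1
  rcases eq_or_lt_of_le hn with hn1 | hn1
  · have hpne : p ≠ 2 := fun hh => h1 ⟨hh, hn1.symm⟩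
    have hp3 : 3 ≤ p := by omega
    refine ⟨(p - 1).minFac, Nat.minFac_prime (by omega), ?_, ?_⟩
    · rw [← hn1, pow_one]; exact Nat.minFac_dvd _
    · intro m hm hmn; omega
  -- now n ≥ 2
  rcases eq_or_lt_of_le (show 2 ≤ n from hn1) with hn2 | hn3
  · -- n = 2
    obtain rfl : n = 2 := hn2.symm
    have hnot : ¬ ∃ k : ℕ, p + 1 = 2 ^ k := fun hh => h2 ⟨rfl, hh⟩
    have hex : ∃ q : ℕ, q.Prime ∧ q ∣ p + 1 ∧ q ≠ 2 := by
      by_contra hq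
      push_neg at hq
      apply hnot
      refine ⟨(p + 1).primeFactorsList.length, ?_⟩
      exact Nat.eq_prime_pow_of_unique_prime_dvd (by omega)
        (fun {d} hd hdvd => hq d hd hdvd)
    obtain ⟨q, hq, hqdvd, hq2⟩ := hex
    have hsq : p ^ 2 - 1 = (p + 1) * (p - 1) := by
      obtain ⟨a, rfl⟩ : ∃ a, p = a + 1 := ⟨p - 1, by omega⟩
      have h' : (a + 1) ^ 2 = (a + 1 + 1) * a + 1 := by ring
      rw [Nat.add_sub_cancel]
      omega
    refine ⟨q, hq, by rw [hsq]; exact hqdvd.mul_right _, ?_⟩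
    intro m hm hmn
    have hm1 : m = 1 := by omega
    subst hm1
    rw [pow_one]
    intro hqp1
    have : q ∣ 2 := by
      have hle : p - 1 ≤ p + 1 := by omega
      have := Nat.dvd_sub hqdvd hqp1
      have he : p + 1 - (p - 1) = 2 := by omega
      rwa [he] at this
    exact hq2 ((Nat.prime_dvd_prime_iff_eq hq Nat.prime_two).mp this)
  -- n ≥ 3
  by_contra hcon
  push_neg at hcon
  have hn0 : 0 < n := by omega
  set Φint := (cyclotomic n ℤ).eval (p : ℤ) with hΦint
  have hΦpos : 0 < Φint := cyclotomic_pos (by omega) _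
  set Φ := Φint.natAbs with hΦdef
  have hcast : (Φ : ℤ) = Φint := Int.natAbs_of_nonneg hΦpos.le
  have hpn1 : 1 ≤ p ^ n := Nat.one_le_pow _ _ (by omega)
  have hΦdvd : Φ ∣ p ^ n - 1 := by
    have h4 : Φint ∣ (p : ℤ) ^ n - 1 := by
      have := eval_dvd (p := cyclotomic n ℤ) (q := X ^ n - 1)
        (cyclotomic.dvd_X_pow_sub_one n ℤ) (x := (p : ℤ))
      simpa using this
    have h5 : (Φ : ℤ) ∣ ((p ^ n - 1 : ℕ) : ℤ) := by
      rw [hcast]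
      convert h4 using 1
      push_cast [Nat.cast_sub hpn1]
      ring
    exact_mod_cast h5
  have hΦgtp : p - 1 < Φ := sub_one_lt_natAbs_cyclotomic_eval (by omega) (by omega)
  have hΦ2 : 2 ≤ Φ := by omega
  -- analysis of an arbitrary prime divisor of Φ
  have key : ∀ s : ℕ, s.Prime → s ∣ Φ →
      (¬ s ∣ p) ∧ n = s ^ (n.factorization s) * orderOf ((p : ZMod s)) ∧
      orderOf ((p : ZMod s)) ∣ s - 1 ∧ orderOf ((p : ZMod s)) < n ∧
      1 ≤ n.factorization s ∧ 1 ≤ orderOf ((p : ZMod s)) := by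
    intro s hs hsΦ
    haveI := Fact.mk hs
    have hsdvd : s ∣ p ^ n - 1 := hsΦ.trans hΦdvd
    have hsp : ¬ s ∣ p := by
      intro hdp
      have h6 : s ∣ p ^ n := hdp.trans (dvd_pow_self p hn0.ne')
      have h7 : s ∣ 1 := by
        have := Nat.dvd_sub h6 hsdvd
        rwa [Nat.sub_sub_self hpn1] at this
      exact hs.one_lt.ne' (Nat.eq_one_of_dvd_one h7)
    have hpne0 : ((p : ZMod s)) ≠ 0 := by
      rwa [Ne, ZMod.natCast_eq_zero_iff]
    have hfermat : ((p : ZMod s)) ^ (s - 1) = 1 := ZMod.pow_card_sub_one_eq_one hpne0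
    have hes1 : orderOf ((p : ZMod s)) ∣ s - 1 := orderOf_dvd_of_pow_eq_one hfermat
    have he0 : 1 ≤ orderOf ((p : ZMod s)) := by
      rcases Nat.eq_zero_or_pos (orderOf ((p : ZMod s))) with h | h
      · rw [h] at hes1
        have := Nat.eq_zero_of_zero_dvd hes1
        have := hs.two_le
        omega
      · exact h
    obtain ⟨m, hm1, hmn, hmdvd⟩ := hcon s hs hsdvd
    have hedvdm : orderOf ((p : ZMod s)) ∣ m := (zs_dvd_iff_order hs (by omega)).mp hmdvd
    have helt : orderOf ((p : ZMod s)) < n := lt_of_le_of_lt (Nat.le_of_dvd (by omega) hedvdm) hmn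
    have hsint : (s : ℤ) ∣ Φint := by
      rw [← hcast]; exact_mod_cast hsΦ
    have horder := zs_order_eq (p := p) hs hn0 hsint
    have hk1 : 1 ≤ n.factorization s := by
      rcases Nat.eq_zero_or_pos (n.factorization s) with h | h
      · rw [h, pow_zero, one_mul] at horder; omega
      · exact h
    exact ⟨hsp, horder, hes1, helt, hk1, he0⟩
  set q := Φ.minFac with hqdef
  have hq : q.Prime := Nat.minFac_prime (by omega)
  have hqΦ : q ∣ Φ := Nat.minFac_dvd _
  obtain ⟨hqp, horder, hes1, helt, hk1, he1⟩ := key q hq hqΦ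
  set e := orderOf ((p : ZMod q)) with hedef
  set k := n.factorization q with hkdef
  have hqdvdn : q ∣ n := Nat.dvd_of_factorization_pos (by omega)
  -- uniqueness of prime divisors of Φ
  have huniq : ∀ s : ℕ, s.Prime → s ∣ Φ → s = q := by
    intro s hs hsΦ
    by_contra hne
    obtain ⟨hsp', horder', hes1', helt', hk1', he1'⟩ := key s hs hsΦ
    have hsn : s ∣ n := Nat.dvd_of_factorization_pos (by omega)
    have hsq : s ∣ e := by
      rw [horder] at hsn
      rcases (Nat.Prime.dvd_mul hs).mp hsn with h | h
      · exact absurd (Nat.prime_dvd_prime_iff_eq hs hq |>.mp (hs.dvd_of_dvd_pow h)) hne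
      · exact h
    have hqs : q ∣ orderOf ((p : ZMod s)) := by
      rw [horder'] at hqdvdn
      rcases (Nat.Prime.dvd_mul hq).mp hqdvdn with h | h
      · exact absurd (Nat.prime_dvd_prime_iff_eq hq hs |>.mp (hq.dvd_of_dvd_pow h)) (fun hh => hne hh.symm)
      · exact h
    have h8 : s ≤ q - 1 := Nat.le_of_dvd (by have := hq.two_le; omega) (hsq.trans hes1)
    have h9 : q ≤ s - 1 := Nat.le_of_dvd (by have := hs.two_le; omega) (hqs.trans hes1')
    have := hs.two_le
    omega
  obtain ⟨t, ht⟩ : ∃ t, Φ = q ^ t :=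
    ⟨Φ.primeFactorsList.length,
      Nat.eq_prime_pow_of_unique_prime_dvd (by omega) (fun {d} hd hdvd => huniq d hd hdvd)⟩
  -- divisibility Φ ∣ geometric sum
  set d := n / q with hddef
  have hdn : d ∣ n := Nat.div_dvd_of_dvd hqdvdn
  have hdlt : d < n := Nat.div_lt_self hn0 hq.one_lt
  have hd1 : 1 ≤ d := by
    have : q * d = n := Nat.mul_div_cancel' hqdvdn
    rcases Nat.eq_zero_or_pos d with h | h
    · rw [h, mul_zero] at this; omega
    · exact h
  have hmem : d ∈ n.properDivisors := Nat.mem_properDivisors.mpr ⟨hdn, hdlt⟩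
  set x : ℤ := (p : ℤ) ^ d with hxdef
  have hx2 : 2 ≤ x := by
    calc (2:ℤ) ≤ (p : ℤ) := by exact_mod_cast hp2
    _ = (p : ℤ) ^ 1 := (pow_one _).symm
    _ ≤ (p : ℤ) ^ d := pow_le_pow_right₀ (by exact_mod_cast (by omega : (1:ℕ) ≤ p)) hd1
  have hPhiSum : Φint ∣ ∑ i ∈ Finset.range q, x ^ i := by
    have h10 := X_pow_sub_one_mul_cyclotomic_dvd_X_pow_sub_one_of_dvd ℤ hmem
    have h11 : (x - 1) * Φint ∣ (p : ℤ) ^ n - 1 := by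
      have := eval_dvd h10 (x := (p : ℤ))
      simpa [hxdef] using this
    have hnq : n = d * q := by
      rw [hddef, Nat.div_mul_cancel hqdvdn]
    have h12 : (p : ℤ) ^ n - 1 = (x - 1) * ∑ i ∈ Finset.range q, x ^ i := by
      rw [hnq, pow_mul, ← hxdef, ← geom_sum_mul]
      ring
    rw [h12] at h11
    exact (mul_dvd_mul_iff_left (by omega : x - 1 ≠ 0)).mp h11
  have hqx : (q : ℤ) ∣ x - 1 := by
    have hed : e ∣ d := by
      have hde : d = q ^ (k - 1) * e := by
        have h40 : q * (q ^ (k - 1) * e) = n := by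
          rw [horder, ← mul_assoc, ← pow_succ']
          have h41 : k - 1 + 1 = k := by omega
          rw [h41]
        rw [hddef, ← h40, Nat.mul_div_cancel_left _ hq.pos]
      rw [hde]
      exact dvd_mul_left e _
    have h13 : q ∣ p ^ d - 1 := (zs_dvd_iff_order hq (by omega)).mpr hed
    have h14 : ((q : ℤ)) ∣ ((p ^ d - 1 : ℕ) : ℤ) := by exact_mod_cast h13
    have hpd1 : 1 ≤ p ^ d := Nat.one_le_pow _ _ (by omega)
    convert h14 using 1
    push_cast [Nat.cast_sub hpd1]
    ring
  clear_value Φint Φ q e k d x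
  -- case q = 2
  by_cases hq2 : q = 2
  · subst hq2
    have hpodd : p % 2 = 1 := by
      rcases Nat.even_or_odd p with h | h
      · exact absurd (even_iff_two_dvd.mp h) hqp
      · omega
    have hp3 : 3 ≤ p := by
      have := hp.two_le
      omega
    -- e = 1, n = 2 ^ k, k ≥ 2
    have he_eq : e = 1 := by
      have h15 : ((p : ZMod 2)) = 1 := by
        have hall : ∀ z : ZMod 2, z = 0 ∨ z = 1 := by decide
        rcases hall ((p : ZMod 2)) with h | h
        · exfalso
          rw [ZMod.natCast_eq_zero_iff] at h
          exact hqp h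
        · exact h
      rw [hedef, h15, orderOf_one]
    have hn2k : n = 2 ^ k := by rw [horder, he_eq, mul_one]
    have hk2 : 2 ≤ k := by
      rcases Nat.lt_or_ge k 2 with h | h
      · interval_cases k <;> omega
      · exact h
    -- d = 2^(k-1) is even
    have hdeven : ∃ j, d = 2 * j := by
      refine ⟨2 ^ (k - 2), ?_⟩
      rw [hddef, hn2k]
      rcases Nat.exists_eq_add_of_le hk2 with ⟨i, hi⟩
      subst hi
      rw [pow_add, show 2 + i - 2 = i from by omega]
      have h16 : (2:ℕ) ^ 2 = 4 := by norm_num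
      omega
    obtain ⟨j, hj⟩ := hdeven
    set y : ℤ := (p : ℤ) ^ j with hydef
    have hyodd : ∃ cc : ℤ, y = 2 * cc + 1 := by
      have hoddp : Odd ((p : ℤ)) := by
        rw [Int.odd_coe_nat, Nat.odd_iff]
        exact hpodd
      have hoy : Odd y := by rw [hydef]; exact hoddp.pow
      obtain ⟨cc, hcc⟩ := hoy
      exact ⟨cc, by omega⟩
    have hxy : x = y ^ 2 := by
      rw [hxdef, hydef, hj, ← pow_mul]
      ring_nf
    have hSum2 : ∑ i ∈ Finset.range 2, x ^ i = x + 1 := by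
      rw [Finset.sum_range_succ, Finset.sum_range_one]
      ring
    have hΦx1 : Φint ∣ x + 1 := by rw [← hSum2]; exact hPhiSum
    have h4nd : ¬ (4 : ℤ) ∣ x + 1 := by
      obtain ⟨cc, hcc⟩ := hyodd
      rw [hxy, hcc]
      intro hdd
      have h19 : y ^ 2 + 1 = 4 * (cc * cc + cc) + 2 := by rw [hcc]; ring
      rw [hcc] at h19
      omega
    have ht1 : t ≤ 1 := by
      by_contra htt
      push_neg at htt
      have h20 : (4 : ℤ) ∣ Φint := by
        rw [← hcast, ht]
        have : (2:ℕ) ^ 2 ∣ 2 ^ t := pow_dvd_pow 2 htt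
        have h21 : ((2:ℕ) ^ 2 : ℤ) ∣ ((2:ℕ) ^ t : ℤ) := by exact_mod_cast this
        push_cast at h21 ⊢
        convert h21 using 1 <;> norm_num
      exact h4nd (h20.trans hΦx1)
    have : Φ ≤ 2 := by
      rw [ht]
      calc 2 ^ t ≤ 2 ^ 1 := Nat.pow_le_pow_right (by norm_num) ht1
      _ = 2 := by norm_num
    omega
  -- q odd
  have hqodd : Odd q := hq.odd_of_ne_two hq2
  have hq3 : 3 ≤ q := by
    have := hq.two_le
    rcases hqodd with ⟨t', ht'⟩
    omega
  obtain ⟨c, hc⟩ := zs_geom_cong hqodd hqx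
  have ht1 : t ≤ 1 := by
    by_contra htt
    push_neg at htt
    have h20 : ((q : ℤ)) ^ 2 ∣ Φint := by
      rw [← hcast, ht]
      have h21 : (q:ℕ) ^ 2 ∣ q ^ t := pow_dvd_pow q htt
      exact_mod_cast h21
    have h22 : ((q : ℤ)) ^ 2 ∣ (q : ℤ) := by
      have h23 := h20.trans hPhiSum
      rw [hc] at h23
      have h24 : ((q:ℤ)) ^ 2 ∣ (q:ℤ) ^ 2 * c := Dvd.intro c rfl
      exact (dvd_add_right h24).mp (by rwa [add_comm] at h23)
    have h25 : ((q:ℤ)) ^ 2 ≤ q := Int.le_of_dvd (by exact_mod_cast hq.pos) h22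
    have h26 : (q:ℤ) * q ≤ q * 1 := by
      calc (q:ℤ) * q = q ^ 2 := (sq (q:ℤ)).symm
      _ ≤ q := h25
      _ = q * 1 := (mul_one _).symm
    have h27 : (q:ℤ) ≤ 1 := le_of_mul_le_mul_left h26 (by exact_mod_cast hq.pos)
    have := hq.two_le
    omega
  have hΦq : Φ = q := by
    have ht1' : t = 1 := by
      rcases Nat.eq_zero_or_pos t with h | h
      · exfalso
        rw [ht, h, pow_zero] at hΦ2
        omega
      · omega
    rw [ht, ht1', pow_one]
  -- size contradictions
  have hqnep : q ≠ p := fun hh => hqp (hh ▸ dvd_refl q)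
  rcases Nat.lt_or_ge q p with hqltp | hqgep
  · omega
  have hqgtp : p < q := by omega
  have hφn : q - 1 ∣ n.totient := by
    have := Nat.totient_dvd_of_dvd hqdvdn
    rwa [Nat.totient_prime hq] at this
  have hφpos : 0 < n.totient := Nat.totient_pos.mpr hn0
  have hφge : q - 1 ≤ n.totient := Nat.le_of_dvd hφpos hφn
  by_cases hp2' : p = 2
  · -- p = 2 case: use the analytic bound
    subst hp2'
    have he2 : 2 ≤ e := by
      by_contra hlt
      push_neg at hlt
      have he1' : e = 1 := by omega
      have h28 : q ∣ 2 ^ 1 - 1 :=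
        (zs_dvd_iff_order hq (by norm_num)).mpr (by rw [← hedef, he1'])
      norm_num at h28
      have := hq.two_le
      omega
    have hq2e : q ≤ 2 ^ e - 1 := by
      have h29 : q ∣ 2 ^ e - 1 := (zs_dvd_iff_order hq (by norm_num)).mpr (by rw [← hedef])
      have h30 : 0 < 2 ^ e - 1 := by
        have : (2:ℕ) ^ 1 ≤ 2 ^ e := Nat.pow_le_pow_right (by norm_num) (by omega)
        omega
      exact Nat.le_of_dvd h30 h29
    have hcop1 : Nat.Coprime q e := by
      rw [Nat.Prime.coprime_iff_not_dvd hq]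
      intro hdd
      have h31 : q ∣ q - 1 := hdd.trans hes1
      have h32 : q ≤ q - 1 := Nat.le_of_dvd (by omega) h31
      omega
    have hqe_cop : Nat.Coprime (q ^ k) e := Nat.Coprime.pow_left _ hcop1
    have hφn_eq : n.totient = (q ^ k).totient * e.totient := by
      rw [horder, Nat.totient_mul hqe_cop]
    have hqk_tot : (q ^ k).totient = q ^ (k - 1) * (q - 1) :=
      Nat.totient_prime_pow hq (by omega)
    have hbound : 4 * q ≤ 2 ^ n.totient := by
      rcases Nat.lt_or_ge k 2 with hk | hk
      · -- k = 1
        have hk1' : k = 1 := by omega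
        have hn_eq : n = q * e := by rw [horder, hk1', pow_one]
        by_cases he2' : e = 2
        · exfalso
          have h29 : q ∣ 2 ^ 2 - 1 :=
            (zs_dvd_iff_order hq (by norm_num)).mpr (by rw [← hedef, he2'])
          norm_num at h29
          have hq3' : q = 3 := (Nat.prime_dvd_prime_iff_eq hq (by norm_num)).mp h29
          exact h3 ⟨rfl, by rw [hn_eq, hq3', he2']⟩
        · have he3 : 3 ≤ e := by omega
          have hφe2 : 2 ≤ e.totient := by
            have hev := Nat.totient_even (by omega : 2 < e)
            have hpos := Nat.totient_pos.mpr (by omega : 0 < e)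
            rcases hev with ⟨w, hw⟩
            omega
          have heq1 : e ≤ q - 1 := Nat.le_of_dvd (by omega) hes1
          have hφge2 : e + 2 ≤ n.totient := by
            rw [hφn_eq, hqk_tot, hk1']
            norm_num
            calc e + 2 ≤ (q - 1) + (q - 1) := by omega
            _ = (q - 1) * 2 := by ring
            _ ≤ (q - 1) * e.totient := Nat.mul_le_mul_left _ hφe2
          have hpe : 2 ^ (e + 2) = 2 ^ e * 4 := by rw [pow_add]; norm_num
          have hpepos : 0 < 2 ^ e := pow_pos (by norm_num) e
          calc 4 * q ≤ 4 * (2 ^ e - 1) := by omega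
          _ ≤ 2 ^ (e + 2) := by omega
          _ ≤ 2 ^ n.totient := Nat.pow_le_pow_right (by norm_num) hφge2
      · -- k ≥ 2
        have hφgeq : q * (q - 1) ≤ n.totient := by
          rw [hφn_eq, hqk_tot]
          have h31 : q ≤ q ^ (k - 1) := by
            calc q = q ^ 1 := (pow_one q).symm
            _ ≤ q ^ (k - 1) := Nat.pow_le_pow_right hq.pos (by omega)
          have h32 : 1 ≤ e.totient := Nat.totient_pos.mpr (by omega)
          calc q * (q - 1) ≤ q ^ (k - 1) * (q - 1) := Nat.mul_le_mul_right _ h31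
          _ ≤ q ^ (k - 1) * (q - 1) * e.totient := Nat.le_mul_of_pos_right _ h32
        have h34 : q + 2 ≤ q * (q - 1) := by
          calc q + 2 ≤ 2 * q := by omega
          _ ≤ (q - 1) * q := Nat.mul_le_mul_right _ (by omega)
          _ = q * (q - 1) := by ring
        have h35 : 2 ^ (q + 2) = 2 ^ q * 4 := by rw [pow_add]; norm_num
        have h36 := Nat.lt_two_pow_self (n := q)
        calc 4 * q ≤ 2 ^ (q + 2) := by omega
        _ ≤ 2 ^ (q * (q - 1)) := Nat.pow_le_pow_right (by norm_num) h34
        _ ≤ 2 ^ n.totient := Nat.pow_le_pow_right (by norm_num) hφgeq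
    -- contradiction with the analytic bound
    have hb := zs_two_bound hn0
    rw [show ((2:ℕ) : ℤ) = (2 : ℤ) from by norm_num] at hΦint
    have heval : (cyclotomic n ℤ).eval 2 = (q : ℤ) := by
      rw [← hΦint, ← hcast, hΦq]
    rw [heval] at hb
    have hcontr : (4 : ℝ) * (q : ℝ) ≤ (2 : ℝ) ^ n.totient := by
      have h38 : ((4 * q : ℕ) : ℝ) ≤ ((2 ^ n.totient : ℕ) : ℝ) := by
        exact_mod_cast hbound
      push_cast at h38
      linarith
    push_cast at hb
    linarith
  · -- p ≥ 3 case
    have hp3 : 3 ≤ p := by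
      have := hp.two_le
      omega
    have hlt : (p - 1) ^ n.totient < Φ := by
      rw [hΦdef, hΦint]
      exact sub_one_pow_totient_lt_natAbs_cyclotomic_eval (by omega) (by omega)
    have hchain : q ≤ (p - 1) ^ n.totient := by
      calc q ≤ 2 ^ (q - 1) := by
            have := Nat.lt_two_pow_self (n := q - 1)
            omega
      _ ≤ 2 ^ n.totient := Nat.pow_le_pow_right (by norm_num) hφge
      _ ≤ (p - 1) ^ n.totient := Nat.pow_le_pow_left (by omega) _
    omega
end

section
/- Under the hypotheses of the preceding lemma (G = P ⋊ H coprime action, 1 ◁ W ◁ U = P' ◁ P a G-chief series with U = P' the unique maximal G-invariant subgroup of P, |P:U| = p², U/W cyclic, P/U irreducible under C = C_H(U/W)), if additionally W = Z(P), then W = [P, U] and for any fixed u ∈ U − W with U/W generated by uW, the map x ↦ [x, u] induces a C-module isomorphism from P/U onto W. -/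
open scoped commutatorElement

/-- In a finite group, if `D ≤ P` with `P` a `p`-group and `⁅P, D⁆ = D`, then `D = ⊥`. -/
private lemma aux_comm_eq_self_imp_bot {G : Type*} [Group G] [Finite G] {p : ℕ}
    (hp : p.Prime) {P D : Subgroup G} (hPp : IsPGroup p P) (hD : D ≤ P)
    (hE : ⁅P, D⁆ = D) : D = ⊥ := by
  haveI : Fact p.Prime := ⟨hp⟩
  obtain ⟨n, hn⟩ := nilpotent_iff_lowerCentralSeries.mp hPp.isNilpotent
  have hinj : Function.Injective (Subgroup.map P.subtype) :=
    Subgroup.map_injective P.subtype_injective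
  have hmapD : Subgroup.map P.subtype (D.subgroupOf P) = D := by
    rw [Subgroup.subgroupOf_map_subtype, inf_eq_left.mpr hD]
  have hmapT : Subgroup.map P.subtype (⊤ : Subgroup ↥P) = P := by
    rw [← MonoidHom.range_eq_map, Subgroup.range_subtype]
  have hfix : ⁅(⊤ : Subgroup ↥P), D.subgroupOf P⁆ = D.subgroupOf P := by
    apply hinj
    rw [Subgroup.map_commutator, hmapT, hmapD, hE]
  have hle : ∀ m : ℕ, D.subgroupOf P ≤ (⊤ : Subgroup ↥P).lowerCentralSeries m := by
    intro m
    induction m with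
    | zero => exact le_top
    | succ m ih =>
        have : (⊤ : Subgroup ↥P).lowerCentralSeries (m + 1) = ⁅(⊤ : Subgroup ↥P).lowerCentralSeries m, ⊤⁆ := rfl
        rw [this]
        calc D.subgroupOf P = ⁅(⊤ : Subgroup ↥P), D.subgroupOf P⁆ := hfix.symm
          _ = ⁅D.subgroupOf P, (⊤ : Subgroup ↥P)⁆ := Subgroup.commutator_comm _ _
          _ ≤ ⁅(⊤ : Subgroup ↥P).lowerCentralSeries m, ⊤⁆ := Subgroup.commutator_mono ih le_rfl
  have : D.subgroupOf P = ⊥ := le_bot_iff.mp (hn ▸ hle n)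
  rw [← hmapD, this, Subgroup.map_bot]

/-- Under the hypotheses of the preceding lemma (`G = P ⋊ H` coprime faithful action,
`1 ◁ W ◁ U = P' ◁ P` a `G`-chief series, `U` the unique maximal `G`-invariant subgroup of `P`,
`|P : U| = p²`, `U/W` cyclic, `P/U` irreducible under `C = C_H(U/W)`), if additionally
`W = Z(P)`, then `W = [P, U]`, and for any `u ∈ U − W` with `U/W = ⟨uW⟩` the map `x ↦ [x, u]`
induces a `C`-module isomorphism from `P/U` onto `W`. -/
theorem commutator_map_iso
    {G : Type*} [Group G] [Finite G] {p : ℕ} (hp : p.Prime)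
    (P H : Subgroup G) (hPn : P.Normal) (hPp : IsPGroup p P)
    (hcompl1 : P ⊓ H = ⊥) (hcompl2 : P ⊔ H = ⊤)
    (hcoprime : Nat.Coprime (Nat.card P) (Nat.card H))
    (hHnt : H ≠ ⊥) (hfaithful : H ⊓ Subgroup.centralizer (P : Set G) = ⊥)
    (W U : Subgroup G) (hWn : W.Normal) (hUn : U.Normal)
    (hWU : W < U) (hUP : U < P) (hWbot : ⊥ < W)
    (hchief1 : ∀ N : Subgroup G, N.Normal → N ≤ W → N = ⊥ ∨ N = W)
    (hchief2 : ∀ N : Subgroup G, N.Normal → W ≤ N → N ≤ U → N = W ∨ N = U)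
    (hchief3 : ∀ N : Subgroup G, N.Normal → U ≤ N → N ≤ P → N = U ∨ N = P)
    (hUWcyc : IsCyclic (↥U ⧸ W.subgroupOf U))
    (hUcomm : U = ⁅P, P⁆)
    (hUuniq : ∀ N : Subgroup G, N.Normal → N < P → N ≤ U)
    (hindex : U.relIndex P = p ^ 2)
    (hCirr : ∀ N : Subgroup G, U ≤ N → N ≤ P →
      (∀ c ∈ H, (∀ u ∈ U, c * u * c⁻¹ * u⁻¹ ∈ W) → ∀ x ∈ N, c * x * c⁻¹ ∈ N) →
      N = U ∨ N = P)
    -- additionally, `W = Z(P)`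
    (hWcenter : W = P ⊓ Subgroup.centralizer (P : Set G)) :
    W = ⁅P, U⁆ ∧
    ∀ u ∈ U, u ∉ W → (∀ v ∈ U, ∃ k : ℤ, v * (u ^ k)⁻¹ ∈ W) →
      -- `σ(x) = [x, u]` maps `P` into `W` ...
      (∀ x ∈ P, x * u * x⁻¹ * u⁻¹ ∈ W) ∧
      -- ... is a homomorphism ...
      (∀ x ∈ P, ∀ y ∈ P,
        (x * y) * u * (x * y)⁻¹ * u⁻¹ = (x * u * x⁻¹ * u⁻¹) * (y * u * y⁻¹ * u⁻¹)) ∧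
      -- ... is onto `W`, with kernel exactly `U`, ...
      (∀ w ∈ W, ∃ x ∈ P, x * u * x⁻¹ * u⁻¹ = w) ∧
      (∀ x ∈ P, (x * u * x⁻¹ * u⁻¹ = 1 ↔ x ∈ U)) ∧
      -- ... and is `C`-equivariant, hence induces a `C`-isomorphism `P/U ≅ W`
      (∀ c ∈ H, (∀ u' ∈ U, c * u' * c⁻¹ * u'⁻¹ ∈ W) → ∀ x ∈ P,
        (c * x * c⁻¹) * u * (c * x * c⁻¹)⁻¹ * u⁻¹ = c * (x * u * x⁻¹ * u⁻¹) * c⁻¹) := by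
  haveI : P.Normal := hPn
  haveI : U.Normal := hUn
  haveI : W.Normal := hWn
  have hWP : W ≤ P := (hWU.le).trans hUP.le
  -- elements of W commute with everything in P
  have hcent : ∀ w ∈ W, ∀ x ∈ P, Commute x w := by
    intro w hw x hx
    have : w ∈ P ⊓ Subgroup.centralizer (P : Set G) := hWcenter ▸ hw
    exact Subgroup.mem_centralizer_iff.mp this.2 x hx
  -- Step 1 : W = ⁅P, U⁆
  have hPU_le_U : ⁅P, U⁆ ≤ U := Subgroup.commutator_le_right P U
  have hmain : W = ⁅P, U⁆ := by
    set D : Subgroup G := ⁅P, U⁆ with hDdef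
    haveI hDn : D.Normal := Subgroup.commutator_normal P U
    have hDU : D ≤ U := hPU_le_U
    have hN : (D ⊔ W) = W ∨ (D ⊔ W) = U :=
      hchief2 (D ⊔ W) (Subgroup.sup_normal D W) le_sup_right (sup_le hDU hWU.le)
    rcases hN with h | h
    · -- D ≤ W, then chief1 forces D = ⊥ or D = W; D = ⊥ impossible.
      have hDW : D ≤ W := le_sup_left.trans h.le
      rcases hchief1 D hDn hDW with hbot | hW
      · exfalso
        -- then U ≤ Z(P), so U ≤ W, contradiction
        have : U ≤ W := by
          intro v hv
          rw [hWcenter]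
          refine ⟨hUP.le hv, Subgroup.mem_centralizer_iff.mpr fun x hx => ?_⟩
          have : ⁅x, v⁆ ∈ (⊥ : Subgroup G) := hbot ▸ Subgroup.commutator_mem_commutator hx hv
          have h1 : x * v * x⁻¹ * v⁻¹ = 1 := Subgroup.mem_bot.mp this
          have : x * v = v * x := by
            have := mul_eq_one_iff_eq_inv.mp h1
            calc x * v = (x * v * x⁻¹ * v⁻¹) * (v * x) := by group
              _ = v * x := by rw [h1, one_mul]
          exact this
        exact absurd (le_antisymm hWU.le this) hWU.ne
      · exact hW.symm
    · -- D ⊔ W = U; show D = ⁅P, D⁆ and derive a contradiction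
      exfalso
      have hDP : D ≤ P := hDU.trans hUP.le
      have hfix : ⁅P, D⁆ = D := by
        apply le_antisymm
        · exact Subgroup.commutator_mono le_rfl hDU
        · -- D = ⁅P, U⁆ ≤ ⁅P, D⁆
          rw [hDdef]
          apply Subgroup.commutator_le.mpr
          intro x hx v hv
          have hv' : v ∈ ((D ⊔ W : Subgroup G) : Set G) := h ▸ hv
          rw [Subgroup.mul_normal D W] at hv'
          obtain ⟨d, hd, w, hw, rfl⟩ := hv'
          have hdP : d ∈ P := hDP hd
          have hcw : ∀ y ∈ P, y * w = w * y := fun y hy => (hcent w hw y hy)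
          have : ⁅x, d * w⁆ = ⁅x, d⁆ := by
            have h1 : x * w = w * x := hcw x hx
            have h2 : d * w = w * d := hcw d hdP
            calc ⁅x, d * w⁆ = x * (d * w) * x⁻¹ * (d * w)⁻¹ := rfl
              _ = x * d * (w * x⁻¹) * w⁻¹ * d⁻¹ := by group
              _ = x * d * (x⁻¹ * w) * w⁻¹ * d⁻¹ := by
                    rw [← ((hcent w hw x hx).inv_left.eq)]
              _ = x * d * x⁻¹ * d⁻¹ := by group
              _ = ⁅x, d⁆ := rfl
          rw [this]
          exact Subgroup.commutator_mem_commutator hx hd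
      have hDbot : D = ⊥ := aux_comm_eq_self_imp_bot hp hPp hDP hfix
      rw [hDbot, bot_sup_eq] at h
      exact hWU.ne h
  refine ⟨hmain, ?_⟩
  -- Step 2: the commutator map with fixed u
  intro u hu hunW hugen
  have huP : u ∈ P := hUP.le hu
  -- (a) σ maps P into W
  have ha : ∀ x ∈ P, x * u * x⁻¹ * u⁻¹ ∈ W := by
    intro x hx
    have : ⁅x, u⁆ ∈ ⁅P, U⁆ := Subgroup.commutator_mem_commutator hx hu
    rwa [← hmain] at this
  -- (b) homomorphism property
  have hb : ∀ x ∈ P, ∀ y ∈ P,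
      (x * y) * u * (x * y)⁻¹ * u⁻¹ = (x * u * x⁻¹ * u⁻¹) * (y * u * y⁻¹ * u⁻¹) := by
    intro x hx y hy
    set c := y * u * y⁻¹ * u⁻¹ with hc
    have hcW : c ∈ W := ha y hy
    have hyu : y * u * y⁻¹ = c * u := by rw [hc]; group
    have hxc : x * c = c * x := (hcent c hcW x hx).symm.eq.symm
    have key : (x * y) * u * (x * y)⁻¹ * u⁻¹ = c * (x * u * x⁻¹ * u⁻¹) := by
      calc (x * y) * u * (x * y)⁻¹ * u⁻¹ = x * (y * u * y⁻¹) * x⁻¹ * u⁻¹ := by group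
        _ = x * (c * u) * x⁻¹ * u⁻¹ := by rw [hyu]
        _ = (x * c) * u * x⁻¹ * u⁻¹ := by group
        _ = (c * x) * u * x⁻¹ * u⁻¹ := by rw [hxc]
        _ = c * (x * u * x⁻¹ * u⁻¹) := by group
    rw [key]
    have hxuW : x * u * x⁻¹ * u⁻¹ ∈ W := ha x hx
    have : Commute (x * u * x⁻¹ * u⁻¹) c := hcent c hcW _ (hWP hxuW)
    rw [this.eq]
  -- key computational fact: ⁅x, u^k⁆ = ⁅x,u⁆ ^ k for x ∈ P
  have hzpow : ∀ x ∈ P, ∀ k : ℤ,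
      x * u ^ k * x⁻¹ * (u ^ k)⁻¹ = (x * u * x⁻¹ * u⁻¹) ^ k := by
    intro x hx k
    set c := x * u * x⁻¹ * u⁻¹ with hc
    have hcW : c ∈ W := ha x hx
    have hcu : Commute c u := (hcent c hcW u huP).symm
    have hxu : x * u * x⁻¹ = c * u := by rw [hc]; group
    have h1 : x * u ^ k * x⁻¹ = (x * u * x⁻¹) ^ k := (conj_zpow).symm
    calc x * u ^ k * x⁻¹ * (u ^ k)⁻¹ = (x * u * x⁻¹) ^ k * (u ^ k)⁻¹ := by rw [h1]
      _ = (c * u) ^ k * (u ^ k)⁻¹ := by rw [hxu]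
      _ = c ^ k * u ^ k * (u ^ k)⁻¹ := by rw [hcu.mul_zpow]
      _ = c ^ k := by group
  -- commuting with u implies commuting with all of U
  have hcommU : ∀ x ∈ P, x * u = u * x → ∀ v ∈ U, x * v = v * x := by
    intro x hx hxu v hv
    obtain ⟨k, hk⟩ := hugen v hv
    have hvform : v = (v * (u ^ k)⁻¹) * u ^ k := by group
    have h1 : Commute x (v * (u ^ k)⁻¹) := hcent _ hk x hx
    have hxu' : Commute x u := hxu
    have h2 : Commute x (u ^ k) := hxu'.zpow_right k
    have : Commute x v := by
      rw [hvform]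
      exact h1.mul_right h2
    exact this.eq
  -- U is contained in the centralizer of itself: U abelian via generator u
  have hUab : ∀ a ∈ U, ∀ b ∈ U, a * b = b * a := by
    intro a ha' b hb
    obtain ⟨k, hk⟩ := hugen a ha'
    have haform : a = (a * (u ^ k)⁻¹) * u ^ k := by group
    have h1 : Commute b (a * (u ^ k)⁻¹) := hcent _ hk b (hUP.le hb)
    have h2 : b * u = u * b := by
      obtain ⟨m, hm⟩ := hugen b hb
      have hbform : b = (b * (u ^ m)⁻¹) * u ^ m := by group
      have c1 : Commute u (b * (u ^ m)⁻¹) := hcent _ hm u huP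
      have c2 : Commute u (u ^ m) := (Commute.refl u).zpow_right m
      have : Commute u b := by rw [hbform]; exact c1.mul_right c2
      exact this.symm.eq
    have h2' : Commute b u := h2
    have h3 : Commute b (u ^ k) := h2'.zpow_right k
    have : Commute b a := by rw [haform]; exact h1.mul_right h3
    exact this.symm.eq
  -- (c) surjectivity onto W
  have hcc : ∀ w ∈ W, ∃ x ∈ P, x * u * x⁻¹ * u⁻¹ = w := by
    intro w hw
    -- the image of σ is a subgroup containing ⁅P, U⁆ = W
    let σ : ↥P →* G :=
      { toFun := fun x => (x : G) * u * (x : G)⁻¹ * u⁻¹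
        map_one' := by simp
        map_mul' := fun x y => hb x x.2 y y.2 }
    have hWle : W ≤ σ.range := by
      rw [hmain]
      apply Subgroup.commutator_le.mpr
      intro x hx v hv
      obtain ⟨k, hk⟩ := hugen v hv
      set w' := v * (u ^ k)⁻¹ with hw'
      have hvform : v = w' * u ^ k := by rw [hw']; group
      -- ⁅x, v⁆ = ⁅x, u^k⁆ since w' is central in P
      have hstep : ⁅x, v⁆ = x * u ^ k * x⁻¹ * (u ^ k)⁻¹ := by
        have hcw : ∀ y ∈ P, y * w' = w' * y := fun y hy => (hcent w' hk y hy)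
        have hxw : x * w' = w' * x := hcw x hx
        have hcW2 : x * u ^ k * x⁻¹ * (u ^ k)⁻¹ ∈ W := by
          rw [hzpow x hx k]; exact Subgroup.zpow_mem W (ha x hx) k
        have hcw2 : (x * u ^ k * x⁻¹ * (u ^ k)⁻¹) * w' = w' * (x * u ^ k * x⁻¹ * (u ^ k)⁻¹) :=
          (hcent _ hk _ (hWP hcW2)).symm.eq.symm
        calc ⁅x, v⁆ = x * (w' * u ^ k) * x⁻¹ * (w' * u ^ k)⁻¹ := by rw [← hvform]; rfl
          _ = (x * w') * u ^ k * x⁻¹ * (u ^ k)⁻¹ * w'⁻¹ := by group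
          _ = (w' * x) * u ^ k * x⁻¹ * (u ^ k)⁻¹ * w'⁻¹ := by rw [hxw]
          _ = w' * (x * u ^ k * x⁻¹ * (u ^ k)⁻¹) * w'⁻¹ := by group
          _ = x * u ^ k * x⁻¹ * (u ^ k)⁻¹ := by
                rw [← hcw2]; group
      rw [hstep, hzpow x hx k]
      -- (x*u*x⁻¹*u⁻¹)^k = σ(⟨x⟩^k)
      have : (x * u * x⁻¹ * u⁻¹ : G) ^ k = σ ((⟨x, hx⟩ : ↥P) ^ k) := by
        rw [map_zpow]
        rfl
      rw [this]
      exact ⟨_, rfl⟩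
    obtain ⟨x, hx⟩ := hWle hw
    exact ⟨(x : G), x.2, hx⟩
  -- (d) kernel is exactly U
  have hd : ∀ x ∈ P, (x * u * x⁻¹ * u⁻¹ = 1 ↔ x ∈ U) := by
    intro x hx
    constructor
    · intro h1
      -- x commutes with u, hence x centralizes U, hence x ∈ C_P(U) = U
      have hxu : x * u = u * x := by
        calc x * u = (x * u * x⁻¹ * u⁻¹) * (u * x) := by group
          _ = u * x := by rw [h1, one_mul]
      -- the centralizer of U intersected with P
      set T : Subgroup G := Subgroup.centralizer (U : Set G) ⊓ P with hT
      have hTn : T.Normal := by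
        constructor
        intro n hn g
        refine ⟨Subgroup.mem_centralizer_iff.mpr fun v hv => ?_, hPn.conj_mem n hn.2 g⟩
        have hv' : g⁻¹ * v * g ∈ U := by
          have := hUn.conj_mem v hv g⁻¹
          simpa using this
        have hn1 : (g⁻¹ * v * g) * n = n * (g⁻¹ * v * g) :=
          Subgroup.mem_centralizer_iff.mp hn.1 _ hv'
        calc v * (g * n * g⁻¹) = g * ((g⁻¹ * v * g) * n) * g⁻¹ := by group
          _ = g * (n * (g⁻¹ * v * g)) * g⁻¹ := by rw [hn1]
          _ = g * n * g⁻¹ * v := by group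
      have hUT : U ≤ T := by
        intro a ha'
        exact ⟨Subgroup.mem_centralizer_iff.mpr fun b hb => hUab b hb a ha', hUP.le ha'⟩
      have hTP : T ≤ P := inf_le_right
      rcases hchief3 T hTn hUT hTP with hTU | hTP'
      · -- T = U, and x ∈ T
        have hxT : x ∈ T := by
          refine ⟨Subgroup.mem_centralizer_iff.mpr fun v hv => ?_, hx⟩
          exact (hcommU x hx hxu v hv).symm
        rwa [hTU] at hxT
      · -- T = P impossible: then U ≤ Z(P) = W
        exfalso
        have : U ≤ W := by
          intro v hv
          rw [hWcenter]
          refine ⟨hUP.le hv, Subgroup.mem_centralizer_iff.mpr fun y hy => ?_⟩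
          have hyT : y ∈ T := hTP' ▸ hy
          exact (Subgroup.mem_centralizer_iff.mp hyT.1 v hv).symm
        exact absurd (le_antisymm hWU.le this) hWU.ne
    · intro hxU
      have : x * u = u * x := (hUab x hxU u hu)
      rw [show x * u * x⁻¹ * u⁻¹ = (x * u) * (u * x)⁻¹ by group, this]
      group
  -- (e) C-equivariance
  have he : ∀ c ∈ H, (∀ u' ∈ U, c * u' * c⁻¹ * u'⁻¹ ∈ W) → ∀ x ∈ P,
      (c * x * c⁻¹) * u * (c * x * c⁻¹)⁻¹ * u⁻¹ = c * (x * u * x⁻¹ * u⁻¹) * c⁻¹ := by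
    intro c _hc hcW x hx
    set w := c * u * c⁻¹ * u⁻¹ with hwdef
    have hwW : w ∈ W := hcW u hu
    have hw2 : c⁻¹ * u * c = (c⁻¹ * w⁻¹ * c) * u := by rw [hwdef]; group
    have hw2W : c⁻¹ * w⁻¹ * c ∈ W := by
      have := hWn.conj_mem w⁻¹ (W.inv_mem hwW) c⁻¹
      simpa using this
    set w₂ := c⁻¹ * w⁻¹ * c with hw₂def
    have hxw₂ : x * w₂ = w₂ * x := (hcent w₂ hw2W x hx).symm.eq.symm
    have huc : u * c⁻¹ * u⁻¹ = c⁻¹ * w := by rw [hwdef]; group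
    set s := x * u * x⁻¹ * u⁻¹ with hsdef
    have hsW : s ∈ W := ha x hx
    have hxu : x * u * x⁻¹ = s * u := by rw [hsdef]; group
    have hcsW : c * s * c⁻¹ ∈ W := hWn.conj_mem s hsW c
    have hcomm : (c * s * c⁻¹) * w = w * (c * s * c⁻¹) :=
      (hcent _ hwW _ (hWP hcsW)).symm.eq.symm
    calc (c * x * c⁻¹) * u * (c * x * c⁻¹)⁻¹ * u⁻¹
        = c * x * (c⁻¹ * u * c) * x⁻¹ * c⁻¹ * u⁻¹ := by group
      _ = c * x * (w₂ * u) * x⁻¹ * c⁻¹ * u⁻¹ := by rw [hw2]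
      _ = c * (x * w₂) * u * x⁻¹ * c⁻¹ * u⁻¹ := by group
      _ = c * (w₂ * x) * u * x⁻¹ * c⁻¹ * u⁻¹ := by rw [hxw₂]
      _ = c * w₂ * (x * u * x⁻¹) * c⁻¹ * u⁻¹ := by group
      _ = c * w₂ * (s * u) * c⁻¹ * u⁻¹ := by rw [hxu]
      _ = c * w₂ * s * (u * c⁻¹ * u⁻¹) := by group
      _ = c * w₂ * s * (c⁻¹ * w) := by rw [huc]
      _ = (c * w₂ * c⁻¹) * (c * s * c⁻¹) * w := by group
      _ = w⁻¹ * (c * s * c⁻¹) * w := by rw [hw₂def]; group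
      _ = w⁻¹ * (w * (c * s * c⁻¹)) := by rw [← hcomm]; group
      _ = c * s * c⁻¹ := by group
      _ = c * (x * u * x⁻¹ * u⁻¹) * c⁻¹ := by rw [hsdef]
  exact ⟨ha, hb, hcc, hd, he⟩
end

section
/- For a Mersenne prime p, every cyclic subgroup of GL(2, p) acting irreducibly on F_p² whose order divides p+1 is contained in SL(2, p); consequently, every subgroup of GL(2,p) isomorphic to the generalized quaternion group Q_{p+1} or Q_{2(p+1)} is contained in SL(2, p). -/
open Matrix Polynomial

section Helpers

variable {p : ℕ}

lemma eig_pow {F : Type*} [Field F] (N : Matrix (Fin 2) (Fin 2) F) {n : ℕ} (hN : N ^ n = 1)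
    (r : F) (hr : r ^ 2 - N.trace * r + N.det = 0) : r ^ n = 1 := by
  have hdet : (r • (1 : Matrix (Fin 2) (Fin 2) F) - N).det = 0 := by
    rw [← hr]
    simp [Matrix.det_fin_two, Matrix.trace_fin_two, Matrix.smul_apply, Matrix.sub_apply,
      Matrix.one_apply]
    ring
  obtain ⟨v, hv0, hv⟩ := (Matrix.exists_mulVec_eq_zero_iff).mpr hdet
  have hev : N.mulVec v = r • v := by
    have := hv
    rw [Matrix.sub_mulVec, sub_eq_zero] at this
    rw [← this, Matrix.smul_mulVec, Matrix.one_mulVec]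
  have key : ∀ k : ℕ, (N ^ k).mulVec v = r ^ k • v := by
    intro k
    induction k with
    | zero => simp [Matrix.one_mulVec]
    | succ k ih =>
      rw [pow_succ, ← Matrix.mulVec_mulVec, hev, Matrix.mulVec_smul, ih, pow_succ,
        smul_smul, mul_comm]
  have h1 : v = r ^ n • v := by rw [← key n, hN, Matrix.one_mulVec]
  obtain ⟨i, hi⟩ := Function.ne_iff.mp hv0
  have : v i = r ^ n * v i := by
    conv_lhs => rw [h1]
    simp
  have hvi : v i ≠ 0 := by simpa using hi
  have h2 : (r ^ n - 1) * v i = 0 := by rw [sub_mul, ← this]; ring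
  rcases mul_eq_zero.mp h2 with h | h
  · exact sub_eq_zero.mp h
  · exact absurd h hvi

lemma lemA (hp : p.Prime) (hp2 : p ≠ 2) (M : Matrix (Fin 2) (Fin 2) (ZMod p))
    (h : M ^ (p + 1) = 1) (hd : M.det = -1) : M ^ 2 = 1 := by
  haveI := Fact.mk hp
  set F := AlgebraicClosure (ZMod p)
  set φ := algebraMap (ZMod p) F with hφ
  have hinj : Function.Injective φ := RingHom.injective φ
  haveI : CharP F p := charP_of_injective_algebraMap hinj p
  set N : Matrix (Fin 2) (Fin 2) F := M.map φ with hN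
  have hNpow : N ^ (p + 1) = 1 := by
    have : φ.mapMatrix (M ^ (p + 1)) = φ.mapMatrix (1 : Matrix (Fin 2) (Fin 2) (ZMod p)) := by
      rw [h]
    rw [map_pow, _root_.map_one] at this
    simpa [RingHom.mapMatrix_apply] using this
  have htr : N.trace = φ M.trace := by
    simp [hN, Matrix.trace_fin_two, Matrix.map_apply]
  have hdet : N.det = φ M.det := by
    simp [hN, Matrix.det_fin_two, Matrix.map_apply]
  set t : F := N.trace
  set d : F := N.det
  have htp : t ^ p = t := by rw [htr, ← map_pow, ZMod.pow_card]
  have hdp : d ^ p = d := by rw [hdet, ← map_pow, ZMod.pow_card]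
  obtain ⟨l, hl⟩ : ∃ l : F, l ^ 2 - t * l + d = 0 := by
    obtain ⟨l, hl⟩ := IsAlgClosed.exists_root (C 1 * X ^ 2 + C (-t) * X + C d)
      (by rw [degree_quadratic one_ne_zero]; decide)
    refine ⟨l, ?_⟩
    have := hl
    simp [IsRoot, eval_add, eval_mul, eval_pow] at this
    linear_combination this
  set m : F := t - l with hm
  have hlm : l * m = d := by rw [hm]; linear_combination -hl
  have hmrt : m ^ 2 - t * m + d = 0 := by rw [hm]; linear_combination hl
  have hl1 : l ^ (p + 1) = 1 := eig_pow N hNpow l hl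
  have hm1 : m ^ (p + 1) = 1 := eig_pow N hNpow m hmrt
  have hroot : ∀ r : F, r ^ 2 - t * r + d = 0 → r = l ∨ r = m := by
    intro r hr
    have : (r - l) * (r - m) = 0 := by rw [hm]; linear_combination hr - hl
    rcases mul_eq_zero.mp this with h' | h'
    · exact Or.inl (sub_eq_zero.mp h')
    · exact Or.inr (sub_eq_zero.mp h')
  have hfrob : ∀ r : F, r ^ 2 - t * r + d = 0 → (r ^ p) ^ 2 - t * (r ^ p) + d = 0 := by
    intro r hr
    have h3 := congrArg (frobenius F p) hr
    simp only [map_sub, map_add, _root_.map_mul, map_pow, frobenius_def, map_zero,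
      mul_pow] at h3
    rw [htp, hdp] at h3
    exact h3
  have hne : (-1 : F) ≠ 1 := by
    haveI : Fact (2 < p) := Fact.mk (lt_of_le_of_ne hp.two_le (Ne.symm hp2))
    exact CharP.neg_one_ne_one (R := F) p
  have hd' : d = -1 := by rw [hdet, hd, map_neg, _root_.map_one]
  rcases hroot _ (hfrob l hl) with hll | hlm'
  swap
  · exfalso
    have hdl : d = l ^ (p + 1) := by rw [pow_succ, hlm', ← hlm]; ring
    rw [hl1, hd'] at hdl
    exact hne hdl
  · have hl2 : l ^ 2 = 1 := by
      have : l ^ (p + 1) = l ^ 2 := by rw [pow_succ, hll, pow_two]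
      rw [← this, hl1]
    have hmm : m ^ p = m := by
      rcases hroot _ (hfrob m hmrt) with h' | h'
      · have hml : m = l := by
          have e1 : m ^ (p * p) = l ^ p := by rw [pow_mul, h']
          have e2 : m ^ (p * p) = m := by
            have hpe : p * p = (p + 1) * (p - 1) + 1 := by
              obtain ⟨q, rfl⟩ : ∃ q, p = q + 1 := ⟨p - 1, by have := hp.two_le; omega⟩
              rw [Nat.add_sub_cancel]; ring
            rw [hpe, pow_add, pow_mul, hm1, one_pow, pow_one, one_mul]
          rw [e2, hll] at e1; exact e1
        rw [hml]; exact hll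
      · exact h'
    have hm2 : m ^ 2 = 1 := by
      have : m ^ (p + 1) = m ^ 2 := by rw [pow_succ, hmm, pow_two]
      rw [← this, hm1]
    have ht0 : t = 0 := by
      have h4 : (l + m) * (l * m) = l ^ 2 * m + l * m ^ 2 := by ring
      have h5 : (l + m) * (-1 : F) = m + l := by
        rw [← hd', ← hlm] at *; rw [h4, hl2, hm2]; ring
      have h6 : (2 : F) * (l + m) = 0 := by linear_combination -h5
      have h2ne : (2 : F) ≠ 0 := by
        intro hc
        apply hne
        have h11 : (1 : F) + 1 = 0 := by rw [← hc]; norm_num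
        linear_combination -h11
      rcases mul_eq_zero.mp h6 with h' | h'
      · exact absurd h' h2ne
      · rw [hm] at h'; linear_combination h'
    have htM : M.trace = 0 := by
      apply hinj
      rw [map_zero, ← htr, ht0]
    have hCH : M ^ 2 = M.trace • M - M.det • 1 := by
      ext i j
      fin_cases i <;> fin_cases j <;>
        simp [pow_two, Matrix.mul_apply, Fin.sum_univ_two, Matrix.trace_fin_two,
          Matrix.det_fin_two, Matrix.one_apply, Matrix.smul_apply, Matrix.sub_apply] <;> ring
    rw [hCH, htM, hd]
    simp

lemma det_sq_one (hp : p.Prime) (u : GL (Fin 2) (ZMod p)) (h : u ^ (p + 1) = 1) :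
    ((u : Matrix (Fin 2) (Fin 2) (ZMod p)).det) ^ 2 = 1 := by
  haveI := Fact.mk hp
  set d := ((u : Matrix (Fin 2) (Fin 2) (ZMod p))).det with hd
  have hd0 : d ≠ 0 := by
    have : IsUnit ((u : Matrix (Fin 2) (Fin 2) (ZMod p))) := u.isUnit
    exact ((Matrix.isUnit_iff_isUnit_det _).mp this).ne_zero
  have h1 : d ^ (p + 1) = 1 := by
    rw [hd, ← Matrix.det_pow, ← Units.val_pow_eq_pow_val, h, Units.val_one, Matrix.det_one]
  have h2 : d ^ (p - 1) = 1 := ZMod.pow_card_sub_one_eq_one hd0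
  have h3 : p + 1 = (p - 1) + 2 := by have := hp.two_le; omega
  rw [h3, pow_add, h2, one_mul] at h1
  exact h1

lemma zmod_half {m : ℕ} (hm : 0 < m) (i : ZMod (2 * m)) (h2 : i + i = 0) (h0 : i ≠ 0) :
    i = (m : ZMod (2 * m)) := by
  haveI : NeZero (2 * m) := ⟨by omega⟩
  have hvlt : i.val < 2 * m := ZMod.val_lt i
  have hv0 : i.val ≠ 0 := fun hc => h0 ((ZMod.val_eq_zero i).mp hc)
  have hdvd : 2 * m ∣ i.val + i.val := by
    apply Nat.dvd_of_mod_eq_zero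
    rw [← ZMod.val_add, h2, ZMod.val_zero]
  have hmd : m ∣ i.val := by
    obtain ⟨c, hc⟩ := hdvd
    have hc' : i.val + i.val = 2 * (m * c) := by rw [hc]; ring
    exact ⟨c, by omega⟩
  have hvm : i.val = m := by
    obtain ⟨c, hc⟩ := hmd
    have hc1 : c = 1 := by
      rcases Nat.lt_or_ge c 2 with h | h
      · interval_cases c
        · omega
        · rfl
      · exfalso
        have : 2 * m ≤ m * c := by
          calc 2 * m = m * 2 := by ring
          _ ≤ m * c := Nat.mul_le_mul_left m h
        omega
    rw [hc1, mul_one] at hc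
    exact hc
  rw [← ZMod.natCast_rightInverse i, hvm]

end Helpers
/-- For a Mersenne prime `p`, every cyclic subgroup of `GL(2, p)` acting irreducibly on `𝔽_p²`
whose order divides `p + 1` lies in `SL(2, p)`; consequently, every subgroup of `GL(2, p)`
isomorphic to a generalized quaternion group `Q_{p+1}` or `Q_{2(p+1)}` (where
`QuaternionGroup m` has order `4m`) lies in `SL(2, p)`. -/
theorem mersenne_quaternion_subgroups_in_SL
    {p : ℕ} (hp : p.Prime) (hmers : ∃ k : ℕ, p + 1 = 2 ^ k) :
    (∀ C : Subgroup (GL (Fin 2) (ZMod p)), IsCyclic C → Nat.card C ∣ p + 1 →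
      (∀ W : Submodule (ZMod p) (Fin 2 → ZMod p),
        (∀ g ∈ C, ∀ v ∈ W, Matrix.mulVec (g : Matrix (Fin 2) (Fin 2) (ZMod p)) v ∈ W) →
        W = ⊥ ∨ W = ⊤) →
      ∀ x ∈ C, (x : Matrix (Fin 2) (Fin 2) (ZMod p)).det = 1) ∧
    (∀ Q : Subgroup (GL (Fin 2) (ZMod p)), ∀ m : ℕ,
      (4 * m = p + 1 ∨ 4 * m = 2 * (p + 1)) → Nonempty (Q ≃* QuaternionGroup m) →
      ∀ x ∈ Q, (x : Matrix (Fin 2) (Fin 2) (ZMod p)).det = 1) := by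
  haveI := Fact.mk hp
  have hp2 : p ≠ 2 := by
    rintro rfl
    obtain ⟨k, hk⟩ := hmers
    match k, hk with
    | 0, hk => omega
    | 1, hk => omega
    | (n + 2), hk =>
      have : (4 : ℕ) ∣ 2 ^ (n + 2) := ⟨2 ^ n, by ring⟩
      omega
  have hplarge : 3 ≤ p := by have := hp.two_le; omega
  have h4dvd : (4 : ℕ) ∣ p + 1 := by
    obtain ⟨k, hk⟩ := hmers
    match k, hk with
    | 0, hk => omega
    | 1, hk => omega
    | (n + 2), hk => exact ⟨2 ^ n, by rw [hk]; ring⟩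
  have hneg1 : (-1 : ZMod p) ≠ 1 := by
    haveI : Fact (2 < p) := Fact.mk (by omega)
    exact CharP.neg_one_ne_one (R := ZMod p) p
  constructor
  · -- Part 1: cyclic irreducible subgroups
    intro C hcyc hcard hirr x hx
    obtain ⟨g, hg⟩ := hcyc.exists_generator
    have hord : orderOf g ∣ p + 1 := (orderOf_dvd_natCard g).trans hcard
    have hg1 : g ^ (p + 1) = 1 := orderOf_dvd_iff_pow_eq_one.mp hord
    have hGg : (g : GL (Fin 2) (ZMod p)) ^ (p + 1) = 1 := by
      have := congrArg (Subgroup.subtype C) hg1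
      simpa using this
    set M : Matrix (Fin 2) (Fin 2) (ZMod p) :=
      ((g : GL (Fin 2) (ZMod p)) : Matrix (Fin 2) (Fin 2) (ZMod p)) with hM
    have hMpow : M ^ (p + 1) = 1 := by
      rw [hM, ← Units.val_pow_eq_pow_val, hGg, Units.val_one]
    have hfo : IsOfFinOrder g := isOfFinOrder_iff_pow_eq_one.mpr ⟨p + 1, by omega, hg1⟩
    -- express any member of C as a natural power of g, as matrices
    have hmem : ∀ y : GL (Fin 2) (ZMod p), y ∈ C →
        ∃ n : ℕ, (y : Matrix (Fin 2) (Fin 2) (ZMod p)) = M ^ n := by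
      intro y hy
      obtain ⟨n, hn⟩ := hfo.mem_powers_iff_mem_zpowers.mpr (hg ⟨y, hy⟩)
      refine ⟨n, ?_⟩
      have : ((g : GL (Fin 2) (ZMod p)) ^ n) = (y : GL (Fin 2) (ZMod p)) := by
        have := congrArg (Subgroup.subtype C) hn
        simpa using this
      rw [← this, hM, Units.val_pow_eq_pow_val]
    -- the determinant of g is ±1
    have hsq := det_sq_one hp (g : GL (Fin 2) (ZMod p)) hGg
    have hdg : M.det = 1 ∨ M.det = -1 := by
      rw [pow_two] at hsq
      exact mul_self_eq_one_iff.mp hsq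
    have hdet1 : M.det = 1 := by
      rcases hdg with h | h
      · exact h
      · -- det g = -1 is impossible: it would give an eigenvector over ZMod p
        exfalso
        have hM2 : M ^ 2 = 1 := lemA hp hp2 M hMpow h
        have hfac : (M - 1) * (M + 1) = 0 := by
          have : (M - 1) * (M + 1) = M ^ 2 - 1 := by noncomm_ring
          rw [this, hM2, sub_self]
        have hdet0 : (M - 1).det * (M + 1).det = 0 := by
          rw [← Matrix.det_mul, hfac]
          exact Matrix.det_zero
        -- obtain an eigenvalue a = ±1 and eigenvector v over ZMod p
        obtain ⟨a, v, hv0, hev⟩ :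
            ∃ (a : ZMod p) (v : Fin 2 → ZMod p), v ≠ 0 ∧ M.mulVec v = a • v := by
          rcases mul_eq_zero.mp hdet0 with h' | h'
          · obtain ⟨v, hv0, hv⟩ := Matrix.exists_mulVec_eq_zero_iff.mpr h'
            refine ⟨1, v, hv0, ?_⟩
            rw [Matrix.sub_mulVec, sub_eq_zero] at hv
            rw [hv, Matrix.one_mulVec, one_smul]
          · obtain ⟨v, hv0, hv⟩ := Matrix.exists_mulVec_eq_zero_iff.mpr h'
            refine ⟨-1, v, hv0, ?_⟩
            rw [Matrix.add_mulVec, add_eq_zero_iff_eq_neg] at hv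
            rw [hv, Matrix.one_mulVec]
            simp
        -- the span of v is a proper nonzero invariant subspace
        set W : Submodule (ZMod p) (Fin 2 → ZMod p) := Submodule.span (ZMod p) {v} with hW
        have hpow : ∀ n : ℕ, (M ^ n).mulVec v = a ^ n • v := by
          intro n
          induction n with
          | zero => simp [Matrix.one_mulVec]
          | succ n ih =>
            rw [pow_succ, ← Matrix.mulVec_mulVec, hev, Matrix.mulVec_smul, ih, pow_succ,
              smul_smul, mul_comm]
        have hWinv : ∀ y ∈ C, ∀ w ∈ W, Matrix.mulVec (y : Matrix (Fin 2) (Fin 2) (ZMod p)) w ∈ W := by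
          intro y hy w hw
          obtain ⟨n, hn⟩ := hmem y hy
          obtain ⟨c, rfl⟩ := Submodule.mem_span_singleton.mp hw
          rw [hn, Matrix.mulVec_smul, hpow n]
          exact Submodule.smul_mem _ _ (Submodule.smul_mem _ _
            (Submodule.mem_span_singleton_self v))
        rcases hirr W hWinv with hbot | htop
        · have : v ∈ W := Submodule.mem_span_singleton_self v
          rw [hbot] at this
          exact hv0 (Submodule.mem_bot _ |>.mp this)
        · have h1 : Module.finrank (ZMod p) W = 1 := finrank_span_singleton hv0
          rw [htop] at h1
          rw [finrank_top] at h1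
          rw [Module.finrank_fin_fun] at h1
          omega
    obtain ⟨n, hn⟩ := hmem x hx
    rw [hn, Matrix.det_pow, hdet1, one_pow]
  · -- Part 2: quaternion subgroups
    intro Q m hm ⟨e⟩ x hx
    have hm0 : 0 < m := by rcases hm with h | h <;> omega
    haveI : NeZero m := ⟨by omega⟩
    have h2m : 2 * m ∣ p + 1 := by
      rcases hm with h | h
      · exact ⟨2, by omega⟩
      · exact ⟨1, by omega⟩
    -- every element of Q has (p+1)-st power 1
    have hexp : ∀ z : Q, z ^ (p + 1) = 1 := by
      intro z
      have hq : (e z) ^ (p + 1) = 1 := by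
        rcases hez : e z with i | i
        · have hi : QuaternionGroup.a i = (QuaternionGroup.a 1 : QuaternionGroup m) ^ i.val := by
            rw [QuaternionGroup.a_one_pow]
            congr 1
            exact (ZMod.natCast_rightInverse i).symm ▸ rfl
          rw [hi, ← pow_mul, QuaternionGroup.a_one_pow]
          have : ((i.val * (p + 1) : ℕ) : ZMod (2 * m)) = 0 := by
            rw [Nat.cast_mul]
            have : ((p + 1 : ℕ) : ZMod (2 * m)) = 0 :=
              (ZMod.natCast_eq_zero_iff _ _).mpr h2m
            rw [this, mul_zero]
          rw [this, ← QuaternionGroup.one_def]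
        · obtain ⟨c, hc⟩ := h4dvd
          rw [hc, pow_mul, QuaternionGroup.xa_pow_four, one_pow]
      have := congrArg e.symm hq
      rwa [← map_pow, MulEquiv.symm_apply_apply, _root_.map_one] at this
    have hpow : ∀ y : GL (Fin 2) (ZMod p), y ∈ Q → y ^ (p + 1) = 1 := by
      intro y hy
      have := congrArg (Subgroup.subtype Q) (hexp ⟨y, hy⟩)
      simpa using this
    -- determinant of any element of Q is ±1
    have hdet2 : ∀ y : GL (Fin 2) (ZMod p), y ∈ Q →
        ((y : Matrix (Fin 2) (Fin 2) (ZMod p)).det = 1 ∨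
         (y : Matrix (Fin 2) (Fin 2) (ZMod p)).det = -1) := by
      intro y hy
      have := det_sq_one hp y (hpow y hy)
      rw [pow_two] at this
      exact mul_self_eq_one_iff.mp this
    rcases hdet2 x hx with h | h
    · exact h
    · -- det x = -1 : x is an involution, hence a square in Q, contradiction
      exfalso
      set M : Matrix (Fin 2) (Fin 2) (ZMod p) :=
        ((x : GL (Fin 2) (ZMod p)) : Matrix (Fin 2) (Fin 2) (ZMod p)) with hM
      have hMpow : M ^ (p + 1) = 1 := by
        rw [hM, ← Units.val_pow_eq_pow_val, hpow x hx, Units.val_one]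
      have hM2 : M ^ 2 = 1 := lemA hp hp2 M hMpow h
      have hx2 : x ^ 2 = 1 := by
        apply Units.ext
        rw [Units.val_pow_eq_pow_val, ← hM, hM2, Units.val_one]
      have hxne : x ≠ 1 := by
        intro hc
        rw [hM, hc] at h
        simp at h
        exact hneg1 h.symm
      -- transport to the quaternion group
      set x' : Q := ⟨x, hx⟩ with hx'
      have hx'2 : x' ^ 2 = 1 := by
        apply Subtype.ext
        simpa using hx2
      have hx'ne : x' ≠ 1 := by
        intro hc
        apply hxne
        exact congrArg Subtype.val hc
      have he2 : (e x') ^ 2 = 1 := by rw [← map_pow, hx'2, _root_.map_one]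
      have hene : e x' ≠ 1 := by
        intro hc
        apply hx'ne
        have := congrArg e.symm hc
        rwa [MulEquiv.symm_apply_apply, _root_.map_one] at this
      -- the only involution of the quaternion group is a m = (xa 0)^2
      have hsq : e x' = (QuaternionGroup.xa 0 : QuaternionGroup m) ^ 2 := by
        rw [QuaternionGroup.xa_sq]
        rcases hez : e x' with i | i
        · rw [hez] at he2 hene
          have hii : i + i = 0 := by
            have : QuaternionGroup.a (i + i) = QuaternionGroup.a 0 := by
              rw [← QuaternionGroup.a_mul_a, ← pow_two, he2, QuaternionGroup.one_def]
            exact QuaternionGroup.a.inj this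
          have hi0 : i ≠ 0 := by
            intro hc
            apply hene
            rw [hc, QuaternionGroup.one_def]
          rw [zmod_half hm0 i hii hi0]
        · rw [hez] at he2
          exfalso
          have : QuaternionGroup.a (m : ZMod (2 * m)) = 1 := by
            rw [← QuaternionGroup.xa_sq i, he2]
          rw [QuaternionGroup.one_def] at this
          have hm' : (m : ZMod (2 * m)) = 0 := QuaternionGroup.a.inj this
          rw [ZMod.natCast_eq_zero_iff] at hm'
          have := Nat.le_of_dvd hm0 hm'
          omega
      -- hence x is a square of an element of Q, so det x = 1
      set y' : Q := e.symm (QuaternionGroup.xa 0)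
      have hxy : x' = y' ^ 2 := by
        have := congrArg e.symm hsq
        rwa [MulEquiv.symm_apply_apply, map_pow] at this
      have hyQ : (y' : GL (Fin 2) (ZMod p)) ∈ Q := y'.2
      have hdx : (x : Matrix (Fin 2) (Fin 2) (ZMod p)).det =
          ((y' : GL (Fin 2) (ZMod p)) : Matrix (Fin 2) (Fin 2) (ZMod p)).det ^ 2 := by
        have hval : x = (y' : GL (Fin 2) (ZMod p)) ^ 2 := by
          have := congrArg (Subgroup.subtype Q) hxy
          simpa using this
        rw [hval, Units.val_pow_eq_pow_val, Matrix.det_pow]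
      have := det_sq_one hp _ (hpow _ hyQ)
      rw [← hdx] at this
      rw [h] at this
      exact hneg1 this
end
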